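/- arXiv:0803.1283 — 6 statements merged into one kernel-verified Lean document; each statement's English description precedes it below -/
import Mathlib

section
/- Let X be a Banach space, M ≥ 1, and F ∈ 𝓕^X_{M,0} (i.e. a = 0), and fix t > 0. Then for every g ∈ X one has lim (F(t/k)^i − I)g = 0 as i/k → 0; precisely: for every ε > 0 there exists δ > 0 such that for all i, k ∈ ℕ with i/k < δ, ‖F(t/k)^i g − g‖ < ε. -/
open Filter Topology MeasureTheory

noncomputable section

variable {X : Type*} [NormedAddCommGroup X] [NormedSpace ℝ X] [CompleteSpace X]

/-- `y` is the value of the strong derivative at `0` of `F : [0,∞) → L(X)` at `ψ`. -/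
def DerivAtZero (F : ℝ → (X →L[ℝ] X)) (ψ y : X) : Prop :=
  Tendsto (fun h : ℝ => h⁻¹ • (F h ψ - F 0 ψ)) (𝓝[>] (0 : ℝ)) (𝓝 y)

/-- The class `𝓕^X_{M,a}`. -/
def MemFClass (F : ℝ → (X →L[ℝ] X)) (M a : ℝ) : Prop :=
  F 0 = 1 ∧
    (∀ n m : ℕ, 0 < n → 0 < m → ∀ s : ℝ, 0 ≤ s →
      ‖(F (s / n)) ^ m‖ ≤ M * Real.exp (a * m * s / n)) ∧
    Dense {ψ : X | ∃ y, DerivAtZero F ψ y}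

/-- The class `𝓕_X`. -/
def MemF (F : ℝ → (X →L[ℝ] X)) : Prop := ∃ M, 1 ≤ M ∧ ∃ a : ℝ, MemFClass F M a

/-- The adjoint of a bounded operator, acting on the dual space. -/
noncomputable def adjCLM (T : X →L[ℝ] X) :
    StrongDual ℝ X →L[ℝ] StrongDual ℝ X :=
  LinearMap.mkContinuous
    { toFun := fun φ => φ.comp T
      map_add' := fun φ ψ => by ext x; simp
      map_smul' := fun c φ => by ext x; simp }
    ‖T‖ (fun φ => by simpa [mul_comm] using φ.opNorm_comp_le T)

/-- `ψ` is the value at `φ` of the strong derivative at `0` of `s ↦ F(s)*`. -/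
def AdjDerivAtZero (F : ℝ → (X →L[ℝ] X)) (φ ψ : StrongDual ℝ X) : Prop :=
  Tendsto (fun h : ℝ => h⁻¹ • (adjCLM (F h) φ - adjCLM (F 0) φ)) (𝓝[>] (0 : ℝ)) (𝓝 ψ)

/-- A `C₀`-semigroup on `X` (as a function on `[0,∞)`, modelled on all of `ℝ`). -/
def IsC0Semigroup (S : ℝ → (X →L[ℝ] X)) : Prop :=
  S 0 = 1 ∧ (∀ a b : ℝ, 0 ≤ a → 0 ≤ b → S (a + b) = S a * S b) ∧
    (∀ x : X, ContinuousOn (fun s => S s x) (Set.Ici (0 : ℝ))) ∧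
    ∃ M, 1 ≤ M ∧ ∃ w : ℝ, ∀ s : ℝ, 0 ≤ s → ‖S s‖ ≤ M * Real.exp (w * s)

/-- `Z` is the generator of the semigroup `S`: the strong derivative of `S` at `0`,
with its maximal domain, coincides with `Z`. -/
def IsGeneratorOf (S : ℝ → (X →L[ℝ] X)) (Z : X →ₗ.[ℝ] X) : Prop :=
  ∀ x y : X, DerivAtZero S x y ↔ ∃ hx : x ∈ Z.domain, Z ⟨x, hx⟩ = y

/-- Every subsequence of `u` has a weakly convergent subsubsequence. -/
def WeakSubCvg (u : ℕ → X) : Prop :=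
  ∀ k : ℕ → ℕ, StrictMono k → ∃ j : ℕ → ℕ, StrictMono j ∧ ∃ L : X,
    ∀ φ : StrongDual ℝ X, Tendsto (fun i => φ (u (k (j i)))) atTop (𝓝 (φ L))

/-- `(f, y)` belongs to the closure of the graph of `F'(0)`. -/
def InClosureGraphF (F : ℝ → (X →L[ℝ] X)) (f y : X) : Prop :=
  (f, y) ∈ closure {p : X × X | DerivAtZero F p.1 p.2}

/-- Lemma 1: for `F ∈ 𝓕^X_{M,0}` and `t > 0`,
`(F(t/k)^i − I)g → 0` as `i/k → 0`, for every `g ∈ X`. -/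
theorem chernoff_lemma1 (F : ℝ → (X →L[ℝ] X)) (M : ℝ) (hM : 1 ≤ M)
    (hF : MemFClass F M 0) (t : ℝ) (ht : 0 < t) (g : X) :
    ∀ ε > 0, ∃ δ > 0, ∀ i k : ℕ, 0 < i → 0 < k → (i : ℝ) / k < δ →
      ‖((F (t / k)) ^ i) g - g‖ < ε := by
  obtain ⟨hF0, hFbd, hFdense⟩ := hF
  intro ε hε
  have hM0 : (0:ℝ) < M := lt_of_lt_of_le one_pos hM
  -- pick ψ in the domain close to g
  obtain ⟨ψ, hψmem, hgψ⟩ :=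
    Metric.mem_closure_iff.mp (hFdense g) (ε / (3 * M)) (by positivity)
  obtain ⟨y, hy⟩ := hψmem
  -- uniform norm bound ‖F(t/k)^i‖ ≤ M
  have hnorm : ∀ k : ℕ, 0 < k → ∀ i : ℕ, 0 < i → ‖(F (t / k)) ^ i‖ ≤ M := by
    intro k hk i hi
    have := hFbd k i hk hi t ht.le
    simpa using this
  have hnorm' : ∀ k : ℕ, 0 < k → ∀ i : ℕ, ∀ x : X,
      ‖((F (t / k)) ^ i) x‖ ≤ M * ‖x‖ := by
    intro k hk i x
    rcases Nat.eq_zero_or_pos i with hi | hi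
    · subst hi
      simpa using le_mul_of_one_le_left (norm_nonneg x) hM
    · exact ((F (t / k)) ^ i).le_of_opNorm_le (hnorm k hk i hi) x
  -- derivative bound near 0
  have hev : ∀ᶠ h in 𝓝[>] (0:ℝ), ‖h⁻¹ • (F h ψ - F 0 ψ) - y‖ < 1 := by
    have := hy.eventually (Metric.ball_mem_nhds y one_pos)
    simpa [Metric.mem_ball, dist_eq_norm] using this
  obtain ⟨h0, hh0, hev⟩ : ∃ h0 > 0, ∀ h : ℝ, 0 < h → h < h0 →
      ‖h⁻¹ • (F h ψ - F 0 ψ) - y‖ < 1 := by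
    rw [eventually_nhdsWithin_iff, Metric.eventually_nhds_iff] at hev
    obtain ⟨d, hd, H⟩ := hev
    exact ⟨d, hd, fun h hp hl =>
      H (by simpa [Real.dist_eq, abs_of_pos hp] using hl) hp⟩
  set C : ℝ := ‖y‖ + 1 with hC
  have hC0 : 0 < C := by positivity
  have hstep : ∀ h : ℝ, 0 < h → h < h0 → ‖F h ψ - ψ‖ ≤ h * C := by
    intro h hpos hlt
    have h1 : ‖h⁻¹ • (F h ψ - F 0 ψ) - y‖ < 1 := hev h hpos hlt
    have h2 : ‖h⁻¹ • (F h ψ - F 0 ψ)‖ ≤ C := by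
      have := norm_le_norm_add_norm_sub' (h⁻¹ • (F h ψ - F 0 ψ)) y
      simp only [hC]
      nlinarith [norm_nonneg (h⁻¹ • (F h ψ - F 0 ψ) - y)]
    have h3 : ‖h⁻¹ • (F h ψ - F 0 ψ)‖ = h⁻¹ * ‖F h ψ - F 0 ψ‖ := by
      rw [norm_smul, Real.norm_eq_abs, abs_of_pos (inv_pos.mpr hpos)]
    have h4 : ‖F h ψ - F 0 ψ‖ ≤ h * C := by
      rw [h3] at h2
      calc ‖F h ψ - F 0 ψ‖ = h * (h⁻¹ * ‖F h ψ - F 0 ψ‖) := by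
            field_simp
        _ ≤ h * C := mul_le_mul_of_nonneg_left h2 hpos.le
    simpa [hF0] using h4
  -- telescoping bound
  have key : ∀ k : ℕ, 0 < k → ∀ i : ℕ,
      ‖((F (t / k)) ^ i) ψ - ψ‖ ≤ i * (M * ‖F (t / k) ψ - ψ‖) := by
    intro k hk i
    induction i with
    | zero => simp
    | succ n ih =>
      have hsplit : ((F (t / k)) ^ (n + 1)) ψ - ψ
          = ((F (t / k)) ^ n) (F (t / k) ψ - ψ) + (((F (t / k)) ^ n) ψ - ψ) := by
        rw [map_sub, pow_succ]
        simp [ContinuousLinearMap.mul_apply]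
      calc ‖((F (t / k)) ^ (n + 1)) ψ - ψ‖
          ≤ ‖((F (t / k)) ^ n) (F (t / k) ψ - ψ)‖ + ‖((F (t / k)) ^ n) ψ - ψ‖ := by
            rw [hsplit]; exact norm_add_le _ _
        _ ≤ M * ‖F (t / k) ψ - ψ‖ + n * (M * ‖F (t / k) ψ - ψ‖) :=
            add_le_add (hnorm' k hk n _) ih
        _ = (n + 1 : ℕ) * (M * ‖F (t / k) ψ - ψ‖) := by push_cast; ring
  -- choose δ
  refine ⟨min (ε / (3 * M * t * C)) (h0 / t), by positivity, ?_⟩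
  intro i k hi hk hik
  have hk0 : (0:ℝ) < k := by exact_mod_cast hk
  have hi1 : (1:ℝ) ≤ i := by exact_mod_cast hi
  have hik2 : (i : ℝ) / k < h0 / t := lt_of_lt_of_le hik (min_le_right _ _)
  have hik1 : (i : ℝ) / k < ε / (3 * M * t * C) := lt_of_lt_of_le hik (min_le_left _ _)
  have htk : 0 < t / k := by positivity
  have htkh0 : t / k < h0 := by
    have h1k : (1:ℝ) / k ≤ (i:ℝ) / k := by gcongr
    have h2 : (1:ℝ) / k < h0 / t := lt_of_le_of_lt h1k hik2
    rw [div_lt_div_iff₀ hk0 ht] at h2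
    rw [div_lt_iff₀ hk0]
    nlinarith
  have hFψ : ‖F (t / k) ψ - ψ‖ ≤ (t / k) * C := hstep _ htk htkh0
  have hmid : ‖((F (t / k)) ^ i) ψ - ψ‖ ≤ (i : ℝ) * (M * ((t / k) * C)) := by
    refine (key k hk i).trans ?_
    exact mul_le_mul_of_nonneg_left
      (mul_le_mul_of_nonneg_left hFψ hM0.le) (Nat.cast_nonneg i)
  have hmidlt : (i : ℝ) * (M * ((t / k) * C)) < ε / 3 := by
    have : (i : ℝ) * (M * ((t / k) * C)) = ((i:ℝ) / k) * (M * t * C) := by ring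
    rw [this]
    have h3 : (0:ℝ) < 3 * M * t * C := by positivity
    have h4 := (lt_div_iff₀ h3).mp hik1
    nlinarith
  have hgψn : ‖g - ψ‖ < ε / (3 * M) := by rwa [dist_eq_norm] at hgψ
  have t1 : ‖((F (t / k)) ^ i) (g - ψ)‖ < ε / 3 := by
    have := hnorm' k hk i (g - ψ)
    have h2 : M * ‖g - ψ‖ < M * (ε / (3 * M)) := by
      exact mul_lt_mul_of_pos_left hgψn hM0
    have h3 : M * (ε / (3 * M)) = ε / 3 := by field_simp
    linarith
  have t3 : ‖ψ - g‖ < ε / 3 := by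
    rw [norm_sub_rev]
    have : ε / (3 * M) ≤ ε / 3 := by
      apply div_le_div_of_nonneg_left hε.le (by norm_num) ?_
      nlinarith
    linarith
  have hfinal : ((F (t / k)) ^ i) g - g
      = ((F (t / k)) ^ i) (g - ψ) + (((F (t / k)) ^ i) ψ - ψ) + (ψ - g) := by
    rw [map_sub]; abel
  calc ‖((F (t / k)) ^ i) g - g‖
      ≤ ‖((F (t / k)) ^ i) (g - ψ)‖ + ‖((F (t / k)) ^ i) ψ - ψ‖ + ‖ψ - g‖ := by
        rw [hfinal]; exact (norm_add_le _ _).trans (add_le_add_left (norm_add_le _ _) _)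
    _ < ε / 3 + ε / 3 + ε / 3 := by
        exact add_lt_add (add_lt_add_of_lt_of_le t1 (hmid.trans hmidlt.le)) t3
    _ = ε := by ring
end
end

section
/- Let X be a Banach space, M ≥ 1, and F ∈ 𝓕^X_{M,0} (i.e. a = 0), and fix t > 0. Then for every g ∈ X one has lim (F(t/k)^i − F(t/k)^l)g = 0 as |i−l|/k → 0; precisely: for every ε > 0 there exists δ > 0 such that for all i, l, k ∈ ℕ with 0 < |i−l|/k < δ, ‖F(t/k)^i g − F(t/k)^l g‖ < ε. -/
open Filter Topology MeasureTheory

noncomputable section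

variable {X : Type*} [NormedAddCommGroup X] [NormedSpace ℝ X] [CompleteSpace X]

omit [CompleteSpace X] in
lemma chernoff_pow_diff_bound (T : X →L[ℝ] X) (C : ℝ) (hC : ∀ m : ℕ, ‖T ^ m‖ ≤ C)
    (x : X) : ∀ l i : ℕ, l ≤ i →
    ‖(T ^ i) x - (T ^ l) x‖ ≤ ((i - l : ℕ) : ℝ) * C * ‖T x - x‖ := by
  intro l i h
  induction i, h using Nat.le_induction with
  | base => simp
  | succ i hli ih =>
    have step : (T ^ (i + 1)) x - (T ^ i) x = (T ^ i) (T x - x) := by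
      rw [pow_succ, map_sub]; rfl
    have h1 : ‖(T ^ (i + 1)) x - (T ^ i) x‖ ≤ C * ‖T x - x‖ := by
      rw [step]
      calc ‖(T ^ i) (T x - x)‖ ≤ ‖T ^ i‖ * ‖T x - x‖ := (T ^ i).le_opNorm _
        _ ≤ C * ‖T x - x‖ := mul_le_mul_of_nonneg_right (hC i) (norm_nonneg _)
    have hcast : ((i + 1 - l : ℕ) : ℝ) = ((i - l : ℕ) : ℝ) + 1 := by
      rw [Nat.succ_sub hli]; push_cast; ring
    calc ‖(T ^ (i + 1)) x - (T ^ l) x‖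
        ≤ ‖(T ^ (i + 1)) x - (T ^ i) x‖ + ‖(T ^ i) x - (T ^ l) x‖ :=
          norm_sub_le_norm_sub_add_norm_sub _ _ _
      _ ≤ C * ‖T x - x‖ + ((i - l : ℕ) : ℝ) * C * ‖T x - x‖ := add_le_add h1 ih
      _ = ((i + 1 - l : ℕ) : ℝ) * C * ‖T x - x‖ := by rw [hcast]; ring

omit [CompleteSpace X] in
lemma chernoff_pow_diff_bound' (T : X →L[ℝ] X) (C : ℝ) (hC : ∀ m : ℕ, ‖T ^ m‖ ≤ C)
    (x : X) (i l : ℕ) :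
    ‖(T ^ i) x - (T ^ l) x‖ ≤ |(i : ℝ) - l| * C * ‖T x - x‖ := by
  rcases le_total l i with h | h
  · have h2 := chernoff_pow_diff_bound T C hC x l i h
    rw [Nat.cast_sub h] at h2
    rwa [abs_of_nonneg (sub_nonneg.mpr (Nat.cast_le.mpr h))]
  · have h2 := chernoff_pow_diff_bound T C hC x i l h
    rw [Nat.cast_sub h] at h2
    rw [norm_sub_rev, abs_sub_comm, abs_of_nonneg (sub_nonneg.mpr (Nat.cast_le.mpr h))]
    exact h2

/-- Lemma 2: for `F ∈ 𝓕^X_{M,0}` and `t > 0`,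
`(F(t/k)^i − F(t/k)^l)g → 0` as `|i − l|/k → 0`, for every `g ∈ X`. -/
theorem chernoff_lemma2 (F : ℝ → (X →L[ℝ] X)) (M : ℝ) (hM : 1 ≤ M)
    (hF : MemFClass F M 0) (t : ℝ) (ht : 0 < t) (g : X) :
    ∀ ε > 0, ∃ δ > 0, ∀ i l k : ℕ, 0 < i → 0 < l → 0 < k →
      0 < |(i : ℝ) - l| / k → |(i : ℝ) - l| / k < δ →
      ‖((F (t / k)) ^ i) g - ((F (t / k)) ^ l) g‖ < ε := by

  intro ε hε
  have hM0 : (0 : ℝ) < M := lt_of_lt_of_le one_pos hM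
  -- choose ψ in the domain close to g
  obtain ⟨ψ, hψball, hψmem⟩ := Metric.dense_iff.mp hF.2.2 g (ε / (3 * M))
    (by positivity)
  obtain ⟨y, hy⟩ := hψmem
  have hgψ : ‖g - ψ‖ < ε / (3 * M) := by
    rw [← dist_eq_norm, dist_comm]; exact Metric.mem_ball.mp hψball
  -- from the derivative, get h₀
  have hev : ∀ᶠ h in 𝓝[>] (0 : ℝ), ‖h⁻¹ • (F h ψ - F 0 ψ) - y‖ < 1 := by
    have := hy (Metric.ball_mem_nhds y one_pos)
    filter_upwards [this] with h hh
    simpa [Metric.mem_ball, dist_eq_norm] using hh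
  obtain ⟨h₀, hh₀, hsub⟩ := mem_nhdsGT_iff_exists_Ioo_subset.mp hev
  have hh₀pos : 0 < h₀ := hh₀
  have key : ∀ h : ℝ, 0 < h → h < h₀ → ‖F h ψ - ψ‖ ≤ h * (‖y‖ + 1) := by
    intro h hpos hlt
    have h1 : ‖h⁻¹ • (F h ψ - F 0 ψ) - y‖ < 1 := hsub ⟨hpos, hlt⟩
    have h2 : ‖h⁻¹ • (F h ψ - F 0 ψ)‖ ≤ ‖y‖ + 1 := by
      have h6 := norm_sub_norm_le (h⁻¹ • (F h ψ - F 0 ψ)) y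
      linarith
    have h3 : ‖h⁻¹ • (F h ψ - F 0 ψ)‖ = h⁻¹ * ‖F h ψ - F 0 ψ‖ := by
      rw [norm_smul, Real.norm_eq_abs, abs_of_pos (inv_pos.mpr hpos)]
    rw [h3] at h2
    have h4 : ‖F h ψ - F 0 ψ‖ ≤ h * (‖y‖ + 1) := by
      have h5 : ‖F h ψ - F 0 ψ‖ = h * (h⁻¹ * ‖F h ψ - F 0 ψ‖) := by field_simp
      rw [h5]
      exact mul_le_mul_of_nonneg_left h2 hpos.le
    simpa [hF.1] using h4
  -- choose δ
  set δ : ℝ := min (h₀ / t) (ε / (3 * M * t * (‖y‖ + 1))) with hδdef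
  have hypos : (0 : ℝ) < ‖y‖ + 1 := by positivity
  have hδpos : 0 < δ := lt_min (by positivity) (by positivity)
  refine ⟨δ, hδpos, ?_⟩
  intro i l k hi hl hk hpos hlt
  have hkR : (0 : ℝ) < k := Nat.cast_pos.mpr hk
  set T := F (t / k) with hT
  -- uniform bound on powers
  have hTbound : ∀ m : ℕ, ‖T ^ m‖ ≤ M := by
    intro m
    rcases Nat.eq_zero_or_pos m with rfl | hm
    · simpa using (le_trans (ContinuousLinearMap.norm_id_le) hM : ‖(1 : X →L[ℝ] X)‖ ≤ M)
    · have := hF.2.1 k m hk hm t ht.le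
      simpa using this
  have hne : (1 : ℝ) ≤ |(i : ℝ) - l| := by
    have : i ≠ l := by
      intro h; rw [h] at hpos; simp at hpos
    have : (1 : ℕ) ≤ Int.natAbs ((i : ℤ) - l) := by omega
    calc (1 : ℝ) ≤ (Int.natAbs ((i : ℤ) - l) : ℝ) := by exact_mod_cast this
      _ = |(i : ℝ) - l| := by
        rw [Nat.cast_natAbs]; push_cast; ring_nf
  -- t/k < h₀
  have hstep : t / k < h₀ := by
    have h1 : |(i : ℝ) - l| / k < h₀ / t := lt_of_lt_of_le hlt (min_le_left _ _)
    have h2 : 1 / (k : ℝ) ≤ |(i : ℝ) - l| / k := by gcongr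
    have h3 : 1 / (k : ℝ) < h₀ / t := lt_of_le_of_lt h2 h1
    rw [div_lt_div_iff₀ hkR ht] at h3
    rw [div_lt_iff₀ hkR]
    linarith
  have hTψ : ‖T ψ - ψ‖ ≤ t / k * (‖y‖ + 1) := key _ (by positivity) hstep
  -- decompose
  have decomp : (T ^ i) g - (T ^ l) g =
      (T ^ i) (g - ψ) + ((T ^ i) ψ - (T ^ l) ψ) + (T ^ l) (ψ - g) := by
    rw [map_sub, map_sub]; abel
  have b1 : ‖(T ^ i) (g - ψ)‖ < ε / 3 := by
    calc ‖(T ^ i) (g - ψ)‖ ≤ ‖T ^ i‖ * ‖g - ψ‖ := (T ^ i).le_opNorm _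
      _ ≤ M * ‖g - ψ‖ := by gcongr; exact hTbound i
      _ < M * (ε / (3 * M)) := by gcongr
      _ = ε / 3 := by field_simp
  have b3 : ‖(T ^ l) (ψ - g)‖ < ε / 3 := by
    calc ‖(T ^ l) (ψ - g)‖ ≤ ‖T ^ l‖ * ‖ψ - g‖ := (T ^ l).le_opNorm _
      _ ≤ M * ‖ψ - g‖ := by gcongr; exact hTbound l
      _ < M * (ε / (3 * M)) := by rw [norm_sub_rev]; gcongr
      _ = ε / 3 := by field_simp
  have b2 : ‖(T ^ i) ψ - (T ^ l) ψ‖ < ε / 3 := by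
    have hmid := chernoff_pow_diff_bound' T M hTbound ψ i l
    have hδ2 : |(i : ℝ) - l| / k < ε / (3 * M * t * (‖y‖ + 1)) :=
      lt_of_lt_of_le hlt (min_le_right _ _)
    calc ‖(T ^ i) ψ - (T ^ l) ψ‖ ≤ |(i : ℝ) - l| * M * ‖T ψ - ψ‖ := hmid
      _ ≤ |(i : ℝ) - l| * M * (t / k * (‖y‖ + 1)) := by gcongr
      _ = (|(i : ℝ) - l| / k) * (M * t * (‖y‖ + 1)) := by field_simp
      _ < (ε / (3 * M * t * (‖y‖ + 1))) * (M * t * (‖y‖ + 1)) := by gcongr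
      _ = ε / 3 := by field_simp
  calc ‖(T ^ i) g - (T ^ l) g‖
      ≤ ‖(T ^ i) (g - ψ) + ((T ^ i) ψ - (T ^ l) ψ)‖ + ‖(T ^ l) (ψ - g)‖ := by
        rw [decomp]; exact norm_add_le _ _
    _ ≤ ‖(T ^ i) (g - ψ)‖ + ‖(T ^ i) ψ - (T ^ l) ψ‖ + ‖(T ^ l) (ψ - g)‖ := by
        gcongr; exact norm_add_le _ _
    _ < ε / 3 + ε / 3 + ε / 3 := by linarith
    _ = ε := by ring
end
end

section
/- Let X be a Banach space, M ≥ 1, and F ∈ 𝓕^X_{M,0} (i.e. a = 0), and fix t > 0. Then for every g ∈ D(F'(0)) one has lim [ (F(t/k)^i − F(t/k)^l)g / ((i−l)·t/k) − F(t/k)^{min(i,l)} F'(0)g ] = 0 as |i−l|/k → 0; precisely: for every ε > 0 there exists δ > 0 such that for all i, l, k ∈ ℕ with i ≠ l and 0 < |i−l|/k < δ, ‖(F(t/k)^i g − F(t/k)^l g)·(k/((i−l)t)) − F(t/k)^{min(i,l)} F'(0)g‖ < ε. -/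
open Filter Topology MeasureTheory

noncomputable section

variable {X : Type*} [NormedAddCommGroup X] [NormedSpace ℝ X] [CompleteSpace X]

private lemma deriv_extract (F : ℝ → (X →L[ℝ] X)) (g y : X) (hg : DerivAtZero F g y)
    (hF0 : F 0 = 1) (ε : ℝ) (hε : 0 < ε) :
    ∃ δ > 0, ∀ s : ℝ, 0 < s → s < δ → ‖s⁻¹ • (F s g - g) - y‖ < ε := by
  obtain ⟨δ, hδ, hd⟩ := Metric.tendsto_nhdsWithin_nhds.mp hg ε hε
  refine ⟨δ, hδ, fun s hs hsδ => ?_⟩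
  have := hd (Set.mem_Ioi.mpr hs) (by simpa [abs_of_pos hs] using hsδ : dist s 0 < δ)
  simpa [hF0, dist_eq_norm] using this

private lemma tele_sum (T : X →L[ℝ] X) (g : X) (n : ℕ) :
    ∑ j ∈ Finset.range n, (T ^ j) (T g - g) = (T ^ n) g - g := by
  induction n with
  | zero => simp
  | succ n ih =>
    rw [Finset.sum_range_succ, ih, pow_succ]
    simp [ContinuousLinearMap.mul_apply, map_sub]

/-- Lemma 3: for `F ∈ 𝓕^X_{M,0}`, `t > 0` and `g ∈ D(F'(0))`
with `F'(0)g = y`, one has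
`(F(t/k)^i − F(t/k)^l)g/((i−l)t/k) − F(t/k)^{min(i,l)} y → 0` as `|i − l|/k → 0`. -/
theorem chernoff_lemma3 (F : ℝ → (X →L[ℝ] X)) (M : ℝ) (hM : 1 ≤ M)
    (hF : MemFClass F M 0) (t : ℝ) (ht : 0 < t) (g y : X)
    (hg : DerivAtZero F g y) :
    ∀ ε > 0, ∃ δ > 0, ∀ i l k : ℕ, 0 < i → 0 < l → 0 < k → i ≠ l →
      0 < |(i : ℝ) - l| / k → |(i : ℝ) - l| / k < δ →
      ‖((k : ℝ) / (((i : ℝ) - l) * t)) • (((F (t / k)) ^ i) g - ((F (t / k)) ^ l) g)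
          - ((F (t / k)) ^ (min i l)) y‖ < ε := by
  intro ε hε
  obtain ⟨hF0, hFbd, hdense⟩ := hF
  have hM0 : (0 : ℝ) < M := lt_of_lt_of_le one_pos hM
  -- power bound
  have powbd : ∀ k : ℕ, 0 < k → ∀ j : ℕ, ∀ x : X, ‖((F (t / k)) ^ j) x‖ ≤ M * ‖x‖ := by
    intro k hk j x
    rcases Nat.eq_zero_or_pos j with hj | hj
    · subst hj; simpa using le_mul_of_one_le_left (norm_nonneg x) hM
    · calc ‖((F (t / k)) ^ j) x‖ ≤ ‖(F (t / k)) ^ j‖ * ‖x‖ := (F (t / k) ^ j).le_opNorm x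
        _ ≤ M * ‖x‖ := by
          have h1 := hFbd k j hk hj t ht.le
          simp only [zero_mul, zero_div, Real.exp_zero, mul_one] at h1
          exact mul_le_mul_of_nonneg_right h1 (norm_nonneg x)
  -- telescoping norm bound
  have tele : ∀ k : ℕ, 0 < k → ∀ j : ℕ, ∀ z : X,
      ‖((F (t / k)) ^ j) z - z‖ ≤ (j : ℝ) * (M * ‖F (t / k) z - z‖) := by
    intro k hk j z
    induction j with
    | zero => simp
    | succ j ih =>
      have heq : ((F (t / k)) ^ (j + 1)) z - z
          = ((F (t / k)) ^ j) (F (t / k) z - z) + (((F (t / k)) ^ j) z - z) := by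
        rw [pow_succ]
        simp [ContinuousLinearMap.mul_apply, map_sub]
      rw [heq]
      have h1 := powbd k hk j (F (t / k) z - z)
      calc ‖((F (t / k)) ^ j) (F (t / k) z - z) + (((F (t / k)) ^ j) z - z)‖
          ≤ ‖((F (t / k)) ^ j) (F (t / k) z - z)‖ + ‖((F (t / k)) ^ j) z - z‖ :=
            norm_add_le _ _
        _ ≤ M * ‖F (t / k) z - z‖ + (j : ℝ) * (M * ‖F (t / k) z - z‖) := add_le_add h1 ih
        _ = ((j : ℕ) + 1 : ℝ) * (M * ‖F (t / k) z - z‖) := by ring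
        _ = ((j + 1 : ℕ) : ℝ) * (M * ‖F (t / k) z - z‖) := by push_cast; ring
  -- approximate y from the domain
  obtain ⟨z, hzmem, hyz⟩ := hdense.exists_dist_lt y (show (0:ℝ) < ε / (3 * M * (M + 1)) by positivity)
  obtain ⟨w, hzw⟩ := hzmem
  rw [dist_eq_norm] at hyz
  -- δ₁ for g, δ₂ for z
  obtain ⟨δ₁, hδ₁, hd₁⟩ := deriv_extract F g y hg hF0 (ε / (3 * M * M)) (by positivity)
  obtain ⟨δ₂, hδ₂, hd₂⟩ := deriv_extract F z w hzw hF0 1 one_pos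
  refine ⟨min (min (δ₁ / t) (δ₂ / t)) (ε / (3 * M * M * (‖w‖ + 1) * t)), by positivity,
    fun i l k hi hl hk hil hpos hlt => ?_⟩
  set s : ℝ := t / k with hs_def
  set T : X →L[ℝ] X := F (t / k) with hT_def
  set n : ℕ := max i l - min i l with hn_def
  have hk0 : (0 : ℝ) < k := by exact_mod_cast hk
  have hs0 : 0 < s := div_pos ht hk0
  have hn1 : 1 ≤ n := by omega
  have hncast : (n : ℝ) = |(i : ℝ) - l| := by
    rcases le_total i l with h | h
    · have hn' : n = l - i := by rw [hn_def, max_eq_right h, min_eq_left h]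
      have hir : (i : ℝ) ≤ l := by exact_mod_cast h
      rw [hn', abs_of_nonpos (by linarith : (i:ℝ) - l ≤ 0)]
      push_cast [h]; ring
    · have hn' : n = i - l := by rw [hn_def, max_eq_left h, min_eq_right h]
      have hir : (l : ℝ) ≤ i := by exact_mod_cast h
      rw [hn', abs_of_nonneg (by linarith : (0:ℝ) ≤ (i:ℝ) - l)]
      push_cast [h]; ring
  have hn0 : (0 : ℝ) < n := by exact_mod_cast hn1
  -- smallness of s and n*s
  have hns : (n : ℝ) * s = |(i : ℝ) - l| / k * t := by
    rw [hncast, hs_def]; ring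
  have hδle : |(i : ℝ) - l| / k < min (min (δ₁ / t) (δ₂ / t)) (ε / (3 * M * M * (‖w‖ + 1) * t)) := hlt
  have hns1 : (n : ℝ) * s < ε / (3 * M * M * (‖w‖ + 1)) := by
    rw [hns]
    calc |(i : ℝ) - l| / k * t < ε / (3 * M * M * (‖w‖ + 1) * t) * t :=
          mul_lt_mul_of_pos_right (lt_of_lt_of_le hδle (min_le_right _ _)) ht
      _ = ε / (3 * M * M * (‖w‖ + 1)) := by field_simp
  have hsn : s ≤ (n : ℝ) * s := le_mul_of_one_le_left hs0.le (by exact_mod_cast hn1)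
  have hs1 : s < δ₁ := by
    calc s ≤ (n : ℝ) * s := hsn
      _ = |(i : ℝ) - l| / k * t := hns
      _ < δ₁ / t * t := mul_lt_mul_of_pos_right
          (lt_of_lt_of_le hδle (le_trans (min_le_left _ _) (min_le_left _ _))) ht
      _ = δ₁ := by field_simp
  have hs2 : s < δ₂ := by
    calc s ≤ (n : ℝ) * s := hsn
      _ = |(i : ℝ) - l| / k * t := hns
      _ < δ₂ / t * t := mul_lt_mul_of_pos_right
          (lt_of_lt_of_le hδle (le_trans (min_le_left _ _) (min_le_right _ _))) ht
      _ = δ₂ := by field_simp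
  -- the two derivative bounds
  have hA : ‖s⁻¹ • (T g - g) - y‖ < ε / (3 * M * M) := hd₁ s hs0 hs1
  have hTz : ‖T z - z‖ ≤ s * (‖w‖ + 1) := by
    have h2 := hd₂ s hs0 hs2
    have h3 : ‖s⁻¹ • (T z - z)‖ ≤ ‖w‖ + 1 := by
      calc ‖s⁻¹ • (T z - z)‖ = ‖s⁻¹ • (T z - z) - w + w‖ := by rw [sub_add_cancel]
        _ ≤ ‖s⁻¹ • (T z - z) - w‖ + ‖w‖ := norm_add_le _ _
        _ ≤ ‖w‖ + 1 := by linarith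
    have h4 : ‖s⁻¹ • (T z - z)‖ = s⁻¹ * ‖T z - z‖ := by
      rw [norm_smul, Real.norm_eq_abs, abs_of_pos (inv_pos.mpr hs0)]
    rw [h4] at h3
    calc ‖T z - z‖ = s * (s⁻¹ * ‖T z - z‖) := by
          rw [← mul_assoc, mul_inv_cancel₀ hs0.ne', one_mul]
      _ ≤ s * (‖w‖ + 1) := mul_le_mul_of_nonneg_left h3 hs0.le
  -- key algebraic identity
  have key : ((k : ℝ) / (((i : ℝ) - l) * t)) • ((T ^ i) g - (T ^ l) g) - (T ^ (min i l)) y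
      = (T ^ (min i l)) ((((n : ℝ) * s)⁻¹) • ((T ^ n) g - g) - y) := by
    have habs : ((n : ℝ) * s)⁻¹ = (k : ℝ) / (|(i : ℝ) - l| * t) := by
      have habs0 : |(i : ℝ) - l| ≠ 0 := by rw [← hncast]; exact hn0.ne'
      rw [hncast, hs_def]
      field_simp
    rcases Nat.lt_or_ge i l with hilt | hige
    · -- i < l : min = i
      have hmin : min i l = i := min_eq_left hilt.le
      have hiadd : i + n = l := by omega
      have hpow : (T ^ l) g = (T ^ i) ((T ^ n) g) := by
        rw [← hiadd, pow_add]; rfl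
      have hc : (k : ℝ) / (((i : ℝ) - l) * t) = -(((n : ℝ) * s)⁻¹) := by
        rw [habs]
        have : |(i : ℝ) - l| = (l : ℝ) - i := by
          rw [abs_of_neg (by exact_mod_cast sub_neg.mpr (by exact_mod_cast hilt : (i:ℝ) < l))]
          ring
        rw [this]
        have hil' : (i : ℝ) - l ≠ 0 := by
          have : (i : ℝ) < l := by exact_mod_cast hilt
          linarith
        have hli : (l : ℝ) - i ≠ 0 := by
          have : (i : ℝ) < l := by exact_mod_cast hilt
          linarith
        field_simp
        ring
      rw [hmin, hpow, hc, map_sub, _root_.map_smul, map_sub]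
      module
    · -- l ≤ i, and i ≠ l so l < i : min = l
      have hllt : l < i := lt_of_le_of_ne hige (Ne.symm hil)
      have hmin : min i l = l := min_eq_right hllt.le
      have hladd : l + n = i := by omega
      have hpow : (T ^ i) g = (T ^ l) ((T ^ n) g) := by
        rw [← hladd, pow_add]; rfl
      have hc : (k : ℝ) / (((i : ℝ) - l) * t) = ((n : ℝ) * s)⁻¹ := by
        rw [habs]
        have : |(i : ℝ) - l| = (i : ℝ) - l := by
          rw [abs_of_pos (by exact_mod_cast sub_pos.mpr (by exact_mod_cast hllt : (l:ℝ) < i))]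
        rw [this]
      rw [hmin, hpow, hc, map_sub, _root_.map_smul, map_sub]
  rw [key]
  -- sum decomposition of the inner vector
  set u : X := s⁻¹ • (T g - g) with hu_def
  have hsum : (((n : ℝ) * s)⁻¹) • ((T ^ n) g - g) - y
      = (n : ℝ)⁻¹ • ∑ j ∈ Finset.range n, ((T ^ j) u - y) := by
    have e1 : ∑ j ∈ Finset.range n, ((T ^ j) u - y)
        = s⁻¹ • ((T ^ n) g - g) - n • y := by
      rw [Finset.sum_sub_distrib, Finset.sum_const, Finset.card_range]
      congr 1
      rw [hu_def, ← tele_sum T g n, Finset.smul_sum]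
      exact Finset.sum_congr rfl fun j _ => _root_.map_smul _ _ _
    rw [e1]
    match_scalars <;> field_simp
  -- bound each summand
  set B : ℝ := M * ‖u - y‖ + (M + 1) * ‖y - z‖ + M * ((n : ℝ) * s) * (‖w‖ + 1) with hB_def
  have termbd : ∀ j ∈ Finset.range n, ‖(T ^ j) u - y‖ ≤ B := by
    intro j hj
    have hjn : (j : ℝ) ≤ n := by
      exact_mod_cast (Finset.mem_range.mp hj).le
    have h1 : ‖(T ^ j) u - y‖ ≤ ‖(T ^ j) (u - y)‖ + ‖(T ^ j) y - y‖ := by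
      have : (T ^ j) u - y = (T ^ j) (u - y) + ((T ^ j) y - y) := by
        rw [map_sub]; abel
      rw [this]; exact norm_add_le _ _
    have h2 : ‖(T ^ j) (u - y)‖ ≤ M * ‖u - y‖ := powbd k hk j (u - y)
    have h3 : ‖(T ^ j) y - y‖ ≤ (M + 1) * ‖y - z‖ + M * ((n : ℝ) * s) * (‖w‖ + 1) := by
      have e1 : (T ^ j) y - y = (T ^ j) (y - z) + ((T ^ j) z - z) + (z - y) := by
        rw [map_sub]; abel
      have b1 : ‖(T ^ j) (y - z)‖ ≤ M * ‖y - z‖ := powbd k hk j (y - z)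
      have b2 : ‖(T ^ j) z - z‖ ≤ (j : ℝ) * (M * ‖T z - z‖) := tele k hk j z
      have b3 : (j : ℝ) * (M * ‖T z - z‖) ≤ (n : ℝ) * (M * (s * (‖w‖ + 1))) := by
        apply mul_le_mul hjn (mul_le_mul_of_nonneg_left hTz hM0.le)
          (by positivity) (by positivity)
      have b4 : ‖z - y‖ = ‖y - z‖ := norm_sub_rev _ _
      calc ‖(T ^ j) y - y‖ ≤ ‖(T ^ j) (y - z)‖ + ‖(T ^ j) z - z‖ + ‖z - y‖ := by
            rw [e1]; exact norm_add₃_le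
        _ ≤ M * ‖y - z‖ + (n : ℝ) * (M * (s * (‖w‖ + 1))) + ‖y - z‖ := by
            rw [b4]; exact add_le_add (add_le_add b1 (le_trans b2 b3)) le_rfl
        _ = (M + 1) * ‖y - z‖ + M * ((n : ℝ) * s) * (‖w‖ + 1) := by ring
    calc ‖(T ^ j) u - y‖ ≤ ‖(T ^ j) (u - y)‖ + ‖(T ^ j) y - y‖ := h1
      _ ≤ B := by rw [hB_def]; linarith
  -- assemble
  have hinner : ‖(((n : ℝ) * s)⁻¹) • ((T ^ n) g - g) - y‖ ≤ B := by
    rw [hsum, norm_smul, Real.norm_eq_abs, abs_of_pos (inv_pos.mpr hn0)]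
    calc (n : ℝ)⁻¹ * ‖∑ j ∈ Finset.range n, ((T ^ j) u - y)‖
        ≤ (n : ℝ)⁻¹ * ∑ j ∈ Finset.range n, ‖(T ^ j) u - y‖ :=
          mul_le_mul_of_nonneg_left (norm_sum_le _ _) (by positivity)
      _ ≤ (n : ℝ)⁻¹ * ((n : ℝ) * B) := by
          apply mul_le_mul_of_nonneg_left _ (by positivity)
          calc ∑ j ∈ Finset.range n, ‖(T ^ j) u - y‖ ≤ ∑ _j ∈ Finset.range n, B :=
                Finset.sum_le_sum termbd
            _ = (n : ℝ) * B := by rw [Finset.sum_const, Finset.card_range, nsmul_eq_mul]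
      _ = B := by field_simp
  have hfinal : ‖(T ^ (min i l)) ((((n : ℝ) * s)⁻¹) • ((T ^ n) g - g) - y)‖ ≤ M * B :=
    le_trans (powbd k hk (min i l) _) (mul_le_mul_of_nonneg_left hinner hM0.le)
  have hBlt : M * B < ε := by
    rw [hB_def]
    have huy : ‖u - y‖ < ε / (3 * M * M) := hA
    have hw1 : (0 : ℝ) < ‖w‖ + 1 := by positivity
    have h1 : M * (M * ‖u - y‖) < ε / 3 := by
      have := mul_lt_mul_of_pos_left huy (by positivity : (0:ℝ) < M * M)
      calc M * (M * ‖u - y‖) = M * M * ‖u - y‖ := by ring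
        _ < M * M * (ε / (3 * M * M)) := this
        _ = ε / 3 := by field_simp
    have h2 : M * ((M + 1) * ‖y - z‖) < ε / 3 := by
      have := mul_lt_mul_of_pos_left hyz (by positivity : (0:ℝ) < M * (M + 1))
      calc M * ((M + 1) * ‖y - z‖) = M * (M + 1) * ‖y - z‖ := by ring
        _ < M * (M + 1) * (ε / (3 * M * (M + 1))) := this
        _ = ε / 3 := by field_simp
    have h3 : M * (M * ((n : ℝ) * s) * (‖w‖ + 1)) < ε / 3 := by
      have := mul_lt_mul_of_pos_left hns1 (by positivity : (0:ℝ) < M * M * (‖w‖ + 1))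
      calc M * (M * ((n : ℝ) * s) * (‖w‖ + 1)) = M * M * (‖w‖ + 1) * ((n : ℝ) * s) := by ring
        _ < M * M * (‖w‖ + 1) * (ε / (3 * M * M * (‖w‖ + 1))) := this
        _ = ε / 3 := by field_simp
    calc M * (M * ‖u - y‖ + (M + 1) * ‖y - z‖ + M * ((n : ℝ) * s) * (‖w‖ + 1))
        = M * (M * ‖u - y‖) + M * ((M + 1) * ‖y - z‖) + M * (M * ((n : ℝ) * s) * (‖w‖ + 1)) := by
          ring
      _ < ε / 3 + ε / 3 + ε / 3 := by linarith
      _ = ε := by ring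
  exact lt_of_le_of_lt hfinal hBlt
end
end

section
/- Let X be a Banach space, F ∈ 𝓕^X_{M,a} with M ≥ 1, a ∈ ℝ, t > 0, and let (n_k) be an increasing sequence of natural numbers. Then for any separable closed linear subspaces Φ ⊂ X and Ψ ⊂ X* there exists a subsequence (g_k) of (n_k) such that the limit lim_{k→∞} (F(t/g_k)^{[g_k s]} g, φ) exists for all g ∈ Φ, φ ∈ Ψ, s > 0. Moreover, if such a subsequence (g_k) is chosen and T_s(g, φ) := lim_{k→∞} (F(t/g_k)^{[g_k s/t]} g, φ) for s ≥ 0, then: (a) T_s(g, φ) is linear in g and in φ with |T_s(g, φ)| ≤ M·exp(a·s)·‖g‖·‖φ‖; (b) s ↦ T_s(g, φ) is continuous for each g ∈ Φ, φ ∈ Ψ, uniformly in φ ranging over any bounded subset of Ψ; (c) if f ∈ Φ ∩ D(F'(0)) and F'(0)f ∈ Φ, then d/ds T_s(f, φ) = T_s(F'(0)f, φ) for all s ≥ 0, uniformly in φ ranging over any bounded subset of Ψ; (d) if φ ∈ D((F*)'(0)) and (F*)'(0)φ ∈ Ψ, then T_m(f, φ) − T_l(f, φ) = ∫_l^m T_s(f,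 (F*)'(0)φ) ds for all m, l ≥ 0 and f ∈ Φ; (e) under the assumptions of (d), d/ds T_s(f, φ) = T_s(f, (F*)'(0)φ) for all s ≥ 0 and f ∈ Φ. -/
open Filter Topology MeasureTheory

noncomputable section

variable {X : Type*} [NormedAddCommGroup X] [NormedSpace ℝ X] [CompleteSpace X]

set_option linter.unusedSectionVars false
set_option maxHeartbeats 1000000

namespace ChernoffAux


variable {F : ℝ → (X →L[ℝ] X)} {M a t : ℝ}

lemma adjCLM_apply (T : X →L[ℝ] X) (φ : StrongDual ℝ X) (x : X) :
    adjCLM T φ x = φ (T x) := rfl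

lemma norm_one_le (hM : 1 ≤ M) : ‖(1 : X →L[ℝ] X)‖ ≤ M :=
  le_trans ContinuousLinearMap.norm_id_le hM

/-- Universal norm bound. -/
lemma pow_bound (hM : 1 ≤ M) (hF : MemFClass F M a) (ht : 0 < t) (N m : ℕ) :
    ‖(F (t / N)) ^ m‖ ≤ M * Real.exp (|a| * ((m : ℝ) * t / N)) := by
  rcases Nat.eq_zero_or_pos N with hN | hN
  · subst hN
    simp only [Nat.cast_zero, div_zero, Real.exp_zero, mul_one, mul_zero]
    rw [hF.1, one_pow]
    simpa using norm_one_le hM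
  rcases Nat.eq_zero_or_pos m with hm | hm
  · subst hm
    simp only [pow_zero, Nat.cast_zero, zero_mul, zero_div, mul_zero, Real.exp_zero, mul_one]
    exact norm_one_le hM
  · have h := hF.2.1 N m hN hm t ht.le
    refine h.trans (mul_le_mul_of_nonneg_left (Real.exp_le_exp.2 ?_) (by linarith))
    have h1 : a * (m : ℝ) * t / N = a * ((m : ℝ) * t / N) := by ring
    rw [h1]
    have h2 : (0:ℝ) ≤ (m : ℝ) * t / N := by positivity
    exact mul_le_mul_of_nonneg_right (le_abs_self a) h2

lemma pow_bound' (hM : 1 ≤ M) (hF : MemFClass F M a) (ht : 0 < t) {N m : ℕ} {c : ℝ}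
    (h : (m : ℝ) * t / N ≤ c) : ‖(F (t / N)) ^ m‖ ≤ M * Real.exp (|a| * c) :=
  (pow_bound hM hF ht N m).trans <| mul_le_mul_of_nonneg_left
    (Real.exp_le_exp.2 (mul_le_mul_of_nonneg_left h (abs_nonneg a))) (by linarith)

lemma floor_mul_div_le {N : ℕ} {x : ℝ} (hx : 0 ≤ x) (ht : 0 < t) :
    (⌊(N : ℝ) * (x / t)⌋₊ : ℝ) * t / N ≤ x := by
  rcases Nat.eq_zero_or_pos N with hN | hN
  · subst hN; simpa using hx
  have hN' : (0:ℝ) < N := by exact_mod_cast hN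
  have h1 : (⌊(N : ℝ) * (x / t)⌋₊ : ℝ) ≤ (N : ℝ) * (x / t) :=
    Nat.floor_le (by positivity)
  rw [div_le_iff₀ hN'] at *
  calc (⌊(N : ℝ) * (x / t)⌋₊ : ℝ) * t ≤ ((N : ℝ) * (x / t)) * t :=
        mul_le_mul_of_nonneg_right h1 ht.le
    _ = x * N := by field_simp

lemma floor_abs_sub {x y : ℝ} (hx : 0 ≤ x) (hy : 0 ≤ y) :
    |(⌊x⌋₊ : ℝ) - (⌊y⌋₊ : ℝ)| ≤ |x - y| + 1 := by
  rw [abs_sub_le_iff]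
  constructor
  · have h1 : (⌊x⌋₊ : ℝ) ≤ x := Nat.floor_le hx
    have h2 : y < (⌊y⌋₊ : ℝ) + 1 := Nat.lt_floor_add_one y
    have : x - y ≤ |x - y| := le_abs_self _
    linarith
  · have h1 : (⌊y⌋₊ : ℝ) ≤ y := Nat.floor_le hy
    have h2 : x < (⌊x⌋₊ : ℝ) + 1 := Nat.lt_floor_add_one x
    have : y - x ≤ |x - y| := neg_le_abs _ |>.trans' (by rw [neg_sub])
    linarith

lemma telescope (A : X →L[ℝ] X) (v : X) {m' m : ℕ} (h : m' ≤ m) :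
    (A ^ m) v - (A ^ m') v = ∑ p ∈ Finset.Ico m' m, (A ^ p) (A v - v) := by
  induction m with
  | zero =>
    have : m' = 0 := Nat.le_zero.1 h
    subst this; simp
  | succ q ih =>
    rcases Nat.lt_or_ge m' (q+1) with hlt | hge
    · have hq : m' ≤ q := by omega
      rw [Finset.sum_Ico_succ_top hq, ← ih hq]
      have : (A ^ (q+1)) v = (A ^ q) (A v) := by
        rw [pow_succ]; rfl
      rw [this]
      simp only [map_sub]
      abel
    · have : m' = q + 1 := by omega
      subst this
      simp

variable {F : ℝ → (X →L[ℝ] X)} {M a t : ℝ}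

/-- quantitative form of DerivAtZero, generic in a normed space. -/
lemma deriv_eps_gen {E : Type*} [NormedAddCommGroup E] [NormedSpace ℝ E]
    {G : ℝ → E} {f y : E} (hG0 : G 0 = f)
    (hd : Tendsto (fun h : ℝ => h⁻¹ • (G h - G 0)) (𝓝[>] (0 : ℝ)) (𝓝 y))
    {ε : ℝ} (hε : 0 < ε) :
    ∃ δ > 0, ∀ h : ℝ, 0 < h → h < δ → ‖G h - f - h • y‖ ≤ ε * h := by
  rw [Metric.tendsto_nhdsWithin_nhds] at hd
  obtain ⟨δ, hδ, hd⟩ := hd ε hε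
  refine ⟨δ, hδ, fun h hh hhδ => ?_⟩
  have h1 := hd (Set.mem_Ioi.2 hh) (by simpa [Real.dist_eq, abs_of_pos hh] using hhδ)
  rw [dist_eq_norm] at h1
  have h2 : G h - f - h • y = h • (h⁻¹ • (G h - G 0) - y) := by
    rw [smul_sub, smul_smul, mul_inv_cancel₀ hh.ne', one_smul, hG0]
  rw [h2, norm_smul, Real.norm_of_nonneg hh.le, mul_comm]
  exact mul_le_mul_of_nonneg_right h1.le hh.le

lemma deriv_eps (hF0 : F 0 = 1) {f y : X} (hd : DerivAtZero F f y) {ε : ℝ} (hε : 0 < ε) :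
    ∃ δ > 0, ∀ h : ℝ, 0 < h → h < δ → ‖F h f - f - h • y‖ ≤ ε * h :=
  deriv_eps_gen (by rw [hF0]; rfl) hd hε

lemma adj_deriv_eps (hF0 : F 0 = 1) {φ ψ : StrongDual ℝ X}
    (hd : AdjDerivAtZero F φ ψ) {ε : ℝ} (hε : 0 < ε) :
    ∃ δ > 0, ∀ h : ℝ, 0 < h → h < δ → ‖adjCLM (F h) φ - φ - h • ψ‖ ≤ ε * h := by
  refine deriv_eps_gen ?_ hd hε
  rw [hF0]; ext x; rfl

/-- Telescoping sum in a dual pairing. -/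
lemma telescope_sum (G : ℕ → ℝ) {m' m : ℕ} (h : m' ≤ m) :
    ∑ p ∈ Finset.Ico m' m, (G (p + 1) - G p) = G m - G m' := by
  rw [Finset.sum_Ico_eq_sub _ h, Finset.sum_range_sub, Finset.sum_range_sub]
  ring

variable {F : ℝ → (X →L[ℝ] X)} {M a t : ℝ}


lemma core_est_le (hM : 1 ≤ M) (hF : MemFClass F M a) (ht : 0 < t) {N : ℕ}
    (g g' : X) (φ : StrongDual ℝ X) {m m' : ℕ} {c K : ℝ}
    (hmc : (m : ℝ) * t / N ≤ c) (h : m' ≤ m)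
    (hK : ‖F (t / N) g' - g'‖ ≤ (t / N) * K) :
    |φ ((F (t / N) ^ m) g) - φ ((F (t / N) ^ m') g)|
      ≤ ‖φ‖ * (2 * (M * Real.exp (|a| * c)) * ‖g - g'‖
          + (M * Real.exp (|a| * c)) * |(m : ℝ) - (m' : ℝ)| * ((t / N) * K)) := by
  set A := F (t / N) with hA
  set C := M * Real.exp (|a| * c) with hC
  have htN : (0:ℝ) ≤ t / N := by positivity
  have hCpos : 0 < C := by
    have : (0:ℝ) < Real.exp (|a| * c) := Real.exp_pos _
    nlinarith
  have hnormC : ∀ p : ℕ, p ≤ m → ‖A ^ p‖ ≤ C := by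
    intro p hp
    refine pow_bound' hM hF ht (le_trans ?_ hmc)
    have : (p : ℝ) ≤ m := by exact_mod_cast hp
    rcases Nat.eq_zero_or_pos N with hN | hN
    · subst hN; simp
    · have hN' : (0:ℝ) < N := by exact_mod_cast hN
      gcongr
  have key : φ ((A ^ m) g) - φ ((A ^ m') g)
      = φ ((A ^ m) (g - g')) + φ ((A ^ m) g' - (A ^ m') g') + φ ((A ^ m') (g' - g)) := by
    simp only [map_sub]
    ring
  rw [key]
  have habs : ∀ u : X, |φ u| ≤ ‖φ‖ * ‖u‖ := fun u => by
    rw [← Real.norm_eq_abs]; exact φ.le_opNorm u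
  have t1 : |φ ((A ^ m) (g - g'))| ≤ ‖φ‖ * (C * ‖g - g'‖) := by
    refine (habs _).trans ?_
    refine mul_le_mul_of_nonneg_left ?_ (norm_nonneg φ)
    exact ((A ^ m).le_opNorm _).trans
      (mul_le_mul_of_nonneg_right (hnormC m le_rfl) (norm_nonneg _))
  have t3 : |φ ((A ^ m') (g' - g))| ≤ ‖φ‖ * (C * ‖g - g'‖) := by
    refine (habs _).trans ?_
    refine mul_le_mul_of_nonneg_left ?_ (norm_nonneg φ)
    refine ((A ^ m').le_opNorm _).trans ?_
    rw [norm_sub_rev g' g]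
    exact mul_le_mul_of_nonneg_right (hnormC m' h) (norm_nonneg _)
  have t2 : |φ ((A ^ m) g' - (A ^ m') g')|
      ≤ ‖φ‖ * (C * |(m : ℝ) - (m' : ℝ)| * ((t / N) * K)) := by
    refine (habs _).trans ?_
    refine mul_le_mul_of_nonneg_left ?_ (norm_nonneg φ)
    rw [telescope A g' h]
    refine (norm_sum_le _ _).trans ?_
    have hterm : ∀ p ∈ Finset.Ico m' m, ‖(A ^ p) (A g' - g')‖ ≤ C * ((t / N) * K) := by
      intro p hp
      rw [Finset.mem_Ico] at hp
      exact ((A ^ p).le_opNorm _).trans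
        (mul_le_mul (hnormC p hp.2.le) hK (norm_nonneg _) hCpos.le)
    refine (Finset.sum_le_sum hterm).trans ?_
    rw [Finset.sum_const, Nat.card_Ico, nsmul_eq_mul]
    have hcast : ((m - m' : ℕ) : ℝ) = |(m : ℝ) - (m' : ℝ)| := by
      rw [Nat.cast_sub h, abs_of_nonneg (by simp [Nat.cast_le.2 h] : (0:ℝ) ≤ (m:ℝ) - m')]
    rw [hcast]; ring_nf; exact le_refl _
  calc |φ ((A ^ m) (g - g')) + φ ((A ^ m) g' - (A ^ m') g') + φ ((A ^ m') (g' - g))|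
      ≤ |φ ((A ^ m) (g - g'))| + |φ ((A ^ m) g' - (A ^ m') g')| + |φ ((A ^ m') (g' - g))| :=
        (abs_add_le _ _).trans (add_le_add (abs_add_le _ _) le_rfl)
    _ ≤ ‖φ‖ * (C * ‖g - g'‖) + ‖φ‖ * (C * |(m : ℝ) - (m' : ℝ)| * ((t / N) * K))
        + ‖φ‖ * (C * ‖g - g'‖) := add_le_add (add_le_add t1 t2) t3
    _ = ‖φ‖ * (2 * C * ‖g - g'‖ + C * |(m : ℝ) - (m' : ℝ)| * ((t / N) * K)) := by ring

lemma core_est (hM : 1 ≤ M) (hF : MemFClass F M a) (ht : 0 < t) {N : ℕ}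
    (g g' : X) (φ : StrongDual ℝ X) {m m' : ℕ} {c K : ℝ}
    (hmc : (m : ℝ) * t / N ≤ c) (hm'c : (m' : ℝ) * t / N ≤ c)
    (hK : ‖F (t / N) g' - g'‖ ≤ (t / N) * K) :
    |φ ((F (t / N) ^ m) g) - φ ((F (t / N) ^ m') g)|
      ≤ ‖φ‖ * (2 * (M * Real.exp (|a| * c)) * ‖g - g'‖
          + (M * Real.exp (|a| * c)) * |(m : ℝ) - (m' : ℝ)| * ((t / N) * K)) := by
  rcases le_total m' m with h | h
  · exact core_est_le hM hF ht g g' φ hmc h hK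
  · rw [abs_sub_comm]
    have := core_est_le hM hF ht g g' φ hm'c h hK
    rwa [abs_sub_comm ((m' : ℝ)) ((m : ℝ))] at this

lemma pow_bound_sharp (hM : 1 ≤ M) (hF : MemFClass F M a) (ht : 0 < t) (N m : ℕ) :
    ‖(F (t / N)) ^ m‖ ≤ M * Real.exp (a * ((m : ℝ) * t / N)) := by
  rcases Nat.eq_zero_or_pos N with hN | hN
  · subst hN
    simp only [Nat.cast_zero, div_zero, Real.exp_zero, mul_one, mul_zero]
    rw [hF.1, one_pow]
    simpa using norm_one_le hM
  rcases Nat.eq_zero_or_pos m with hm | hm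
  · subst hm
    simp only [pow_zero, Nat.cast_zero, zero_mul, zero_div, mul_zero, Real.exp_zero, mul_one]
    exact norm_one_le hM
  · have h := hF.2.1 N m hN hm t ht.le
    have h1 : a * (m : ℝ) * t / N = a * ((m : ℝ) * t / N) := by ring
    rwa [h1] at h

lemma small_div_le {P ε : ℝ} (hP : 0 ≤ P) (hε : 0 < ε) : P * (ε / (8 * (P + 1))) ≤ ε / 8 := by
  rw [mul_div_assoc']
  rw [div_le_div_iff₀ (by positivity) (by norm_num)]
  nlinarith [mul_nonneg hP hε.le]

lemma small_div_lt {P ε : ℝ} (hP : 0 ≤ P) (hε : 0 < ε) : P * (ε / (P + 1)) < ε := by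
  rw [mul_div_assoc']
  rw [div_lt_iff₀ (by positivity)]
  nlinarith [mul_nonneg hP hε.le]

variable {N : ℕ → ℕ}

lemma tdiv0 (ht : 0 < t) (hN : Tendsto N atTop atTop) :
    Tendsto (fun j => t / (N j : ℝ)) atTop (𝓝 0) := by
  have h1 : Tendsto (fun j => ((N j : ℝ))) atTop atTop :=
    tendsto_natCast_atTop_atTop.comp hN
  have h2 : Tendsto (fun j => ((N j : ℝ))⁻¹) atTop (𝓝 0) := h1.inv_tendsto_atTop
  have h3 := h2.const_mul t
  simpa [div_eq_mul_inv] using h3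

lemma mtN (ht : 0 < t) (hN : Tendsto N atTop atTop) {s : ℝ} (hs : 0 ≤ s) :
    Tendsto (fun j => (⌊(N j : ℝ) * (s / t)⌋₊ : ℝ) * t / N j) atTop (𝓝 s) := by
  have h0 := tdiv0 ht hN
  have hlow : Tendsto (fun j => s - t / (N j : ℝ)) atTop (𝓝 s) := by
    simpa using (tendsto_const_nhds (x := s)).sub h0
  refine tendsto_of_tendsto_of_tendsto_of_le_of_le' hlow tendsto_const_nhds ?_ ?_
  · filter_upwards [hN.eventually_ge_atTop 1] with j hj
    have hN' : (0:ℝ) < (N j : ℝ) := by exact_mod_cast hj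
    have h1 : (N j : ℝ) * (s / t) < (⌊(N j : ℝ) * (s / t)⌋₊ : ℝ) + 1 :=
      Nat.lt_floor_add_one _
    rw [sub_le_iff_le_add, ← add_div, le_div_iff₀ hN']
    calc s * (N j:ℝ) = ((N j : ℝ) * (s / t)) * t := by field_simp
      _ ≤ ((⌊(N j : ℝ) * (s / t)⌋₊ : ℝ) + 1) * t := by
          exact mul_le_mul_of_nonneg_right h1.le ht.le
      _ = (⌊(N j : ℝ) * (s / t)⌋₊ : ℝ) * t + t := by ring
  · filter_upwards with j
    exact floor_mul_div_le hs ht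

/-- step functions are measurable -/
lemma step_meas (g : X) (χ : StrongDual ℝ X) (Nj : ℕ) :
    Measurable (fun r : ℝ => χ ((F (t / Nj) ^ ⌊(Nj : ℝ) * (r / t)⌋₊) g)) := by
  have h1 : Measurable (fun r : ℝ => (Nj : ℝ) * (r / t)) :=
    (measurable_id.div_const t).const_mul _
  exact Measurable.comp (g := fun p : ℕ => χ ((F (t / Nj) ^ p) g))
    measurable_from_top (Nat.measurable_floor.comp h1)

lemma step_bound (hM : 1 ≤ M) (hF : MemFClass F M a) (ht : 0 < t) {Nj : ℕ}
    (g : X) (χ : StrongDual ℝ X) {r b : ℝ} (hr : r ≤ b) :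
    |χ ((F (t / Nj) ^ ⌊(Nj : ℝ) * (r / t)⌋₊) g)|
      ≤ ‖χ‖ * (M * Real.exp (|a| * max b 0)) * ‖g‖ := by
  have h1 : (⌊(Nj : ℝ) * (r / t)⌋₊ : ℝ) * t / Nj ≤ max b 0 := by
    rcases le_or_gt 0 r with h | h
    · exact (floor_mul_div_le h ht).trans (le_max_of_le_left hr)
    · have : (Nj : ℝ) * (r / t) ≤ 0 := by
        apply mul_nonpos_of_nonneg_of_nonpos (by positivity)
        exact (div_nonpos_iff.2 (Or.inr ⟨h.le, ht.le⟩))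
      rw [Nat.floor_of_nonpos this]
      simp [le_max_right]
  have h2 := pow_bound' hM hF ht h1
  calc |χ ((F (t / Nj) ^ ⌊(Nj : ℝ) * (r / t)⌋₊) g)|
      ≤ ‖χ‖ * ‖(F (t / Nj) ^ ⌊(Nj : ℝ) * (r / t)⌋₊) g‖ := by
        rw [← Real.norm_eq_abs]; exact χ.le_opNorm _
    _ ≤ ‖χ‖ * (‖F (t / Nj) ^ ⌊(Nj : ℝ) * (r / t)⌋₊‖ * ‖g‖) :=
        mul_le_mul_of_nonneg_left (ContinuousLinearMap.le_opNorm _ _) (norm_nonneg _)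
    _ ≤ ‖χ‖ * ((M * Real.exp (|a| * max b 0)) * ‖g‖) := by
        refine mul_le_mul_of_nonneg_left ?_ (norm_nonneg _)
        exact mul_le_mul_of_nonneg_right h2 (norm_nonneg _)
    _ = ‖χ‖ * (M * Real.exp (|a| * max b 0)) * ‖g‖ := by ring

lemma intble_of_bdd {f : ℝ → ℝ} (hf : Measurable f) {α β C : ℝ}
    (hC : ∀ r ∈ Set.uIoc α β, |f r| ≤ C) : IntervalIntegrable f volume α β := by
  rw [intervalIntegrable_iff]
  have hfin : volume (Set.uIoc α β) < ⊤ := by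
    have h : Set.uIoc α β = Set.Ioc (min α β) (max α β) := rfl
    rw [h]; exact measure_Ioc_lt_top
  refine Integrable.mono' ((integrableOn_const hfin.ne) : IntegrableOn (fun _ => C) _ _)
    hf.aestronglyMeasurable.restrict ?_
  rw [ae_restrict_iff' measurableSet_uIoc]
  exact ae_of_all _ (fun r hr => by simpa [Real.norm_eq_abs] using hC r hr)

lemma step_intble (hM : 1 ≤ M) (hF : MemFClass F M a) (ht : 0 < t) {Nj : ℕ}
    (g : X) (χ : StrongDual ℝ X) (α β : ℝ) :
    IntervalIntegrable (fun r : ℝ => χ ((F (t / Nj) ^ ⌊(Nj : ℝ) * (r / t)⌋₊) g))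
      volume α β := by
  refine intble_of_bdd (step_meas g χ Nj)
    (C := ‖χ‖ * (M * Real.exp (|a| * max (max α β) 0)) * ‖g‖) (fun r hr => ?_)
  exact step_bound hM hF ht g χ (le_trans hr.2 (le_refl _))

lemma piece (hM : 1 ≤ M) (hF : MemFClass F M a) (ht : 0 < t) {Nj : ℕ} (hNj : 1 ≤ Nj)
    (g : X) (χ : StrongDual ℝ X) (q : ℕ) :
    ∫ r in ((q : ℝ) * t / Nj)..(((q : ℝ) + 1) * t / Nj),
        χ ((F (t / Nj) ^ ⌊(Nj : ℝ) * (r / t)⌋₊) g)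
      = (t / Nj) * χ ((F (t / Nj) ^ q) g) := by
  have hN' : (0:ℝ) < Nj := by exact_mod_cast hNj
  have hlt : (q : ℝ) * t / Nj < ((q : ℝ) + 1) * t / Nj := by
    rw [div_lt_div_iff₀ hN' hN']
    nlinarith
  have h0 : ∀ᵐ (r : ℝ), r ≠ ((q : ℝ) + 1) * t / Nj := by
    rw [ae_iff]
    have he : {r : ℝ | ¬ r ≠ ((q : ℝ) + 1) * t / Nj} = {((q : ℝ) + 1) * t / Nj} := by
      ext r; simp [not_not]
    rw [he]; exact measure_singleton _
  have hae : ∀ᵐ (r : ℝ), r ∈ Set.uIoc ((q : ℝ) * t / Nj) (((q : ℝ) + 1) * t / Nj) →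
      χ ((F (t / Nj) ^ ⌊(Nj : ℝ) * (r / t)⌋₊) g) = χ ((F (t / Nj) ^ q) g) := by
    filter_upwards [h0] with r hne hmem
    rw [Set.uIoc_of_le hlt.le] at hmem
    obtain ⟨h1, h2⟩ := hmem
    have h2' : r < ((q : ℝ) + 1) * t / Nj := lt_of_le_of_ne h2 hne
    have hq : (q : ℝ) < (Nj : ℝ) * (r / t) := by
      rw [div_lt_iff₀ hN'] at h1
      rw [mul_div_assoc', lt_div_iff₀ ht]
      linarith
    have hq2 : (Nj : ℝ) * (r / t) < (q : ℝ) + 1 := by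
      rw [lt_div_iff₀ hN'] at h2'
      rw [mul_div_assoc', div_lt_iff₀ ht]
      linarith
    have hr0 : (0:ℝ) ≤ (Nj : ℝ) * (r / t) := le_trans (Nat.cast_nonneg q) hq.le
    have hfl : ⌊(Nj : ℝ) * (r / t)⌋₊ = q := by
      rw [Nat.floor_eq_iff hr0]
      exact ⟨hq.le, hq2⟩
    rw [hfl]
  rw [intervalIntegral.integral_congr_ae hae, intervalIntegral.integral_const, smul_eq_mul]
  congr 1
  field_simp
  ring

lemma sumid (hM : 1 ≤ M) (hF : MemFClass F M a) (ht : 0 < t) {Nj : ℕ} (hNj : 1 ≤ Nj)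
    (g : X) (χ : StrongDual ℝ X) {ml q : ℕ} (h : ml ≤ q) :
    (t / Nj) * ∑ p ∈ Finset.Ico ml q, χ ((F (t / Nj) ^ p) g)
      = ∫ r in ((ml : ℝ) * t / Nj)..((q : ℝ) * t / Nj),
          χ ((F (t / Nj) ^ ⌊(Nj : ℝ) * (r / t)⌋₊) g) := by
  induction q with
  | zero =>
    have : ml = 0 := Nat.le_zero.1 h
    subst this; simp
  | succ q ih =>
    rcases Nat.lt_or_ge ml (q+1) with hlt | hge
    · have hq : ml ≤ q := by omega
      rw [Finset.sum_Ico_succ_top hq, mul_add, ih hq, ← piece hM hF ht hNj g χ q]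
      have hadd := intervalIntegral.integral_add_adjacent_intervals
        (step_intble hM hF ht (Nj := Nj) g χ ((ml : ℝ) * t / Nj) ((q : ℝ) * t / Nj))
        (step_intble hM hF ht (Nj := Nj) g χ ((q : ℝ) * t / Nj) (((q : ℝ) + 1) * t / Nj))
      convert hadd using 3 <;> push_cast <;> ring
    · have : ml = q+1 := by omega
      subst this; simp

variable {Φ : Submodule ℝ X} {Ψ : Submodule ℝ (StrongDual ℝ X)}
variable {T : ℝ → X → StrongDual ℝ X → ℝ}

lemma l_sub_floor {Nj : ℕ} (hNj : 1 ≤ Nj) (ht : 0 < t) {l : ℝ} (hl : 0 ≤ l) :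
    l - (⌊(Nj : ℝ) * (l / t)⌋₊ : ℝ) * t / Nj ≤ t / Nj := by
  have hN' : (0:ℝ) < Nj := by exact_mod_cast hNj
  have h1 : (Nj : ℝ) * (l / t) < (⌊(Nj : ℝ) * (l / t)⌋₊ : ℝ) + 1 := Nat.lt_floor_add_one _
  rw [sub_le_iff_le_add, ← add_div, le_div_iff₀ hN']
  calc l * (Nj : ℝ) = ((Nj : ℝ) * (l / t)) * t := by field_simp
    _ ≤ ((⌊(Nj : ℝ) * (l / t)⌋₊ : ℝ) + 1) * t := mul_le_mul_of_nonneg_right h1.le ht.le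
    _ ≤ t + (⌊(Nj : ℝ) * (l / t)⌋₊ : ℝ) * t := by ring_nf; exact le_refl _

lemma riemann (hM : 1 ≤ M) (hF : MemFClass F M a) (ht : 0 < t)
    (hN : Tendsto N atTop atTop)
    (HT : ∀ s : ℝ, 0 ≤ s → ∀ g ∈ Φ, ∀ φ ∈ Ψ,
      Tendsto (fun j => φ ((F (t / N j) ^ ⌊(N j : ℝ) * (s / t)⌋₊) g)) atTop (𝓝 (T s g φ)))
    {g : X} (hg : g ∈ Φ) {χ : StrongDual ℝ X} (hχ : χ ∈ Ψ)
    {l m : ℝ} (hl : 0 ≤ l) (hlm : l ≤ m) :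
    Tendsto (fun j => (t / (N j : ℝ)) *
        ∑ p ∈ Finset.Ico ⌊(N j : ℝ) * (l / t)⌋₊ ⌊(N j : ℝ) * (m / t)⌋₊,
          χ ((F (t / N j) ^ p) g)) atTop (𝓝 (∫ r in l..m, T r g χ)) := by
  have hm : 0 ≤ m := hl.trans hlm
  have hα_le : ∀ j : ℕ, (⌊(N j : ℝ) * (l / t)⌋₊ : ℝ) * t / N j ≤ l :=
    fun j => floor_mul_div_le hl ht
  have hβ_le : ∀ j : ℕ, (⌊(N j : ℝ) * (m / t)⌋₊ : ℝ) * t / N j ≤ m :=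
    fun j => floor_mul_div_le hm ht
  have hfloor_le : ∀ j : ℕ, ⌊(N j : ℝ) * (l / t)⌋₊ ≤ ⌊(N j : ℝ) * (m / t)⌋₊ := by
    intro j
    apply Nat.floor_le_floor
    have h : l / t ≤ m / t := by gcongr
    exact mul_le_mul_of_nonneg_left h (Nat.cast_nonneg _)
  -- I2 tendsto
  have h2 : Tendsto (fun j => ∫ r in l..m, χ ((F (t / N j) ^ ⌊(N j : ℝ) * (r / t)⌋₊) g))
      atTop (𝓝 (∫ r in l..m, T r g χ)) := by
    refine intervalIntegral.tendsto_integral_filter_of_dominated_convergence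
      (fun _ => ‖χ‖ * (M * Real.exp (|a| * max m 0)) * ‖g‖) ?_ ?_ ?_ ?_
    · exact Eventually.of_forall fun j => ((step_meas g χ (N j)).aestronglyMeasurable).restrict
    · refine Eventually.of_forall fun j => ae_of_all _ fun r hr => ?_
      rw [Set.uIoc_of_le hlm] at hr
      rw [Real.norm_eq_abs]
      exact step_bound hM hF ht g χ hr.2
    · exact intervalIntegrable_const
    · refine ae_of_all _ fun r hr => ?_
      rw [Set.uIoc_of_le hlm] at hr
      exact HT r (hl.trans hr.1.le) g hg χ hχ
  -- I1 tendsto to 0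
  have h1 : Tendsto (fun j => ∫ r in ((⌊(N j : ℝ) * (l / t)⌋₊ : ℝ) * t / N j)..l,
      χ ((F (t / N j) ^ ⌊(N j : ℝ) * (r / t)⌋₊) g)) atTop (𝓝 0) := by
    refine squeeze_zero_norm' ?_
      (by simpa using (tdiv0 ht hN).const_mul (‖χ‖ * (M * Real.exp (|a| * max l 0)) * ‖g‖))
    filter_upwards [hN.eventually_ge_atTop 1] with j hj
    have hb : ∀ r ∈ Set.uIoc ((⌊(N j : ℝ) * (l / t)⌋₊ : ℝ) * t / N j) l,
        ‖χ ((F (t / N j) ^ ⌊(N j : ℝ) * (r / t)⌋₊) g)‖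
          ≤ ‖χ‖ * (M * Real.exp (|a| * max l 0)) * ‖g‖ := by
      intro r hr
      rw [Set.uIoc_of_le (hα_le j)] at hr
      rw [Real.norm_eq_abs]
      exact step_bound hM hF ht g χ hr.2
    refine (intervalIntegral.norm_integral_le_of_norm_le_const hb).trans ?_
    have h3 : |l - (⌊(N j : ℝ) * (l / t)⌋₊ : ℝ) * t / N j|
        ≤ t / N j := by
      rw [abs_of_nonneg (sub_nonneg.2 (hα_le j))]
      exact l_sub_floor hj ht hl
    have hC : (0:ℝ) ≤ ‖χ‖ * (M * Real.exp (|a| * max l 0)) * ‖g‖ := by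
      have h4 : (0:ℝ) < M := lt_of_lt_of_le one_pos hM
      positivity
    exact mul_le_mul_of_nonneg_left h3 hC
  -- I3 tendsto to 0
  have h3 : Tendsto (fun j => ∫ r in m..((⌊(N j : ℝ) * (m / t)⌋₊ : ℝ) * t / N j),
      χ ((F (t / N j) ^ ⌊(N j : ℝ) * (r / t)⌋₊) g)) atTop (𝓝 0) := by
    refine squeeze_zero_norm' ?_
      (by simpa using (tdiv0 ht hN).const_mul (‖χ‖ * (M * Real.exp (|a| * max m 0)) * ‖g‖))
    filter_upwards [hN.eventually_ge_atTop 1] with j hj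
    have hb : ∀ r ∈ Set.uIoc m ((⌊(N j : ℝ) * (m / t)⌋₊ : ℝ) * t / N j),
        ‖χ ((F (t / N j) ^ ⌊(N j : ℝ) * (r / t)⌋₊) g)‖
          ≤ ‖χ‖ * (M * Real.exp (|a| * max m 0)) * ‖g‖ := by
      intro r hr
      rw [Set.uIoc, min_eq_right (hβ_le j), max_eq_left (hβ_le j)] at hr
      rw [Real.norm_eq_abs]
      exact step_bound hM hF ht g χ hr.2
    refine (intervalIntegral.norm_integral_le_of_norm_le_const hb).trans ?_
    have h4 : |(⌊(N j : ℝ) * (m / t)⌋₊ : ℝ) * t / N j - m| ≤ t / N j := by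
      rw [abs_sub_comm, abs_of_nonneg (sub_nonneg.2 (hβ_le j))]
      exact l_sub_floor hj ht hm
    have hC : (0:ℝ) ≤ ‖χ‖ * (M * Real.exp (|a| * max m 0)) * ‖g‖ := by
      have h5 : (0:ℝ) < M := lt_of_lt_of_le one_pos hM
      positivity
    exact mul_le_mul_of_nonneg_left h4 hC
  have hsum := (h1.add h2).add h3
  rw [zero_add, add_zero] at hsum
  refine hsum.congr' ?_
  filter_upwards [hN.eventually_ge_atTop 1] with j hj
  rw [intervalIntegral.integral_add_adjacent_intervals
      (step_intble hM hF ht (Nj := N j) g χ _ l) (step_intble hM hF ht (Nj := N j) g χ l m),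
    intervalIntegral.integral_add_adjacent_intervals
      (step_intble hM hF ht (Nj := N j) g χ _ m) (step_intble hM hF ht (Nj := N j) g χ m _)]
  exact (sumid hM hF ht hj g χ (hfloor_le j)).symm

/-- Key uniform-continuity estimate. -/
lemma key1 (hM : 1 ≤ M) (hF : MemFClass F M a) (ht : 0 < t)
    (hN : Tendsto N atTop atTop)
    (HT : ∀ s : ℝ, 0 ≤ s → ∀ g ∈ Φ, ∀ φ ∈ Ψ,
      Tendsto (fun j => φ ((F (t / N j) ^ ⌊(N j : ℝ) * (s / t)⌋₊) g)) atTop (𝓝 (T s g φ)))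
    {g : X} (hg : g ∈ Φ) (R : ℝ) {s : ℝ} (hs : 0 ≤ s) {ε : ℝ} (hε : 0 < ε) :
    ∃ δ > 0, ∀ s' : ℝ, 0 ≤ s' → |s' - s| < δ → ∀ φ ∈ Ψ, ‖φ‖ ≤ R →
      |T s' g φ - T s g φ| < ε := by
  set R' := max R 1 with hR'
  have hR'pos : (0:ℝ) < R' := lt_of_lt_of_le one_pos (le_max_right _ _)
  set C := M * Real.exp (|a| * (s + 1)) with hC
  have hMpos : (0:ℝ) < M := lt_of_lt_of_le one_pos hM
  have hCpos : (0:ℝ) < C := by positivity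
  set ε₁ := ε / (8 * (C * R' + 1)) with hε₁
  have hε₁pos : 0 < ε₁ := by positivity
  -- approximate g by an element of the domain of F'(0)
  obtain ⟨g', hg'D, hgg'⟩ := hF.2.2.exists_dist_lt g hε₁pos
  obtain ⟨y', hy'⟩ := hg'D
  rw [dist_eq_norm] at hgg'
  obtain ⟨δ₀, hδ₀pos, hδ₀⟩ := deriv_eps hF.1 hy' one_pos
  set K := ‖y'‖ + 1 with hKdef
  have hKpos : (0:ℝ) < K := by positivity
  have hKb : ∀ h : ℝ, 0 < h → h < δ₀ → ‖F h g' - g'‖ ≤ h * K := by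
    intro h hh hhδ
    have h1 := hδ₀ h hh hhδ
    calc ‖F h g' - g'‖ = ‖(F h g' - g' - h • y') + h • y'‖ := by abel_nf
      _ ≤ ‖F h g' - g' - h • y'‖ + ‖h • y'‖ := norm_add_le _ _
      _ ≤ 1 * h + h * ‖y'‖ := by
          refine add_le_add h1 ?_
          rw [norm_smul, Real.norm_of_nonneg hh.le]
      _ = h * K := by rw [hKdef]; ring
  set δ := min 1 (ε / (8 * (C * R' * K + 1))) with hδdef
  have hδpos : 0 < δ := lt_min one_pos (by positivity)
  refine ⟨δ, hδpos, fun s' hs' hss' φ hφ hφR => ?_⟩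
  have hφR' : ‖φ‖ ≤ R' := hφR.trans (le_max_left _ _)
  have hs'1 : s' ≤ s + 1 := by
    have h1 : s' - s ≤ |s' - s| := le_abs_self _
    have h2 : δ ≤ 1 := min_le_left _ _
    linarith
  -- the two sequences
  have hTd : Tendsto (fun j => φ ((F (t / N j) ^ ⌊(N j : ℝ) * (s' / t)⌋₊) g)
        - φ ((F (t / N j) ^ ⌊(N j : ℝ) * (s / t)⌋₊) g)) atTop
      (𝓝 (T s' g φ - T s g φ)) :=
    (HT s' hs' g hg φ hφ).sub (HT s hs g hg φ hφ)
  -- eventual bound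
  have hbound : ∀ᶠ j in atTop,
      |φ ((F (t / N j) ^ ⌊(N j : ℝ) * (s' / t)⌋₊) g)
        - φ ((F (t / N j) ^ ⌊(N j : ℝ) * (s / t)⌋₊) g)|
      ≤ R' * (2 * C * ε₁ + C * K * (|s' - s| + t / N j)) := by
    filter_upwards [hN.eventually_ge_atTop 1,
      (tdiv0 ht hN).eventually (gt_mem_nhds hδ₀pos)] with j hj hjδ
    have hN' : (0:ℝ) < N j := by exact_mod_cast hj
    have htN : 0 < t / (N j : ℝ) := by positivity
    have hcore := core_est hM hF ht (N := N j) g g' φ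
      (m := ⌊(N j : ℝ) * (s' / t)⌋₊) (m' := ⌊(N j : ℝ) * (s / t)⌋₊) (c := s + 1) (K := K)
      ((floor_mul_div_le hs' ht).trans hs'1)
      ((floor_mul_div_le hs ht).trans (by linarith))
      (hKb _ htN hjδ)
    refine hcore.trans ?_
    have hfl : |(⌊(N j : ℝ) * (s' / t)⌋₊ : ℝ) - (⌊(N j : ℝ) * (s / t)⌋₊ : ℝ)|
        ≤ (N j : ℝ) * |s' - s| / t + 1 := by
      refine (floor_abs_sub (by positivity) (by positivity)).trans ?_
      have h1 : |(N j : ℝ) * (s' / t) - (N j : ℝ) * (s / t)| = (N j : ℝ) * |s' - s| / t := by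
        rw [← mul_sub, ← sub_div, abs_mul, abs_div, abs_of_nonneg hN'.le,
          abs_of_pos ht, mul_div_assoc]
      rw [h1]
    have hmain : C * |(⌊(N j : ℝ) * (s' / t)⌋₊ : ℝ) - (⌊(N j : ℝ) * (s / t)⌋₊ : ℝ)|
          * ((t / N j) * K)
        ≤ C * K * (|s' - s| + t / N j) := by
      have h2 : ((N j : ℝ) * |s' - s| / t + 1) * (t / N j) = |s' - s| + t / N j := by
        field_simp
      calc C * |(⌊(N j : ℝ) * (s' / t)⌋₊ : ℝ) - (⌊(N j : ℝ) * (s / t)⌋₊ : ℝ)| * ((t / N j) * K)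
          ≤ C * ((N j : ℝ) * |s' - s| / t + 1) * ((t / N j) * K) := by
            refine mul_le_mul_of_nonneg_right ?_ (by positivity)
            exact mul_le_mul_of_nonneg_left hfl hCpos.le
        _ = C * K * (((N j : ℝ) * |s' - s| / t + 1) * (t / N j)) := by ring
        _ = C * K * (|s' - s| + t / N j) := by rw [h2]
    have hinner : 2 * C * ‖g - g'‖ + C * |(⌊(N j : ℝ) * (s' / t)⌋₊ : ℝ)
          - (⌊(N j : ℝ) * (s / t)⌋₊ : ℝ)| * ((t / N j) * K)
        ≤ 2 * C * ε₁ + C * K * (|s' - s| + t / N j) := by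
      refine add_le_add ?_ hmain
      exact mul_le_mul_of_nonneg_left hgg'.le (by positivity)
    refine mul_le_mul hφR' hinner ?_ hR'pos.le
    positivity
  have h0 : Tendsto (fun j : ℕ => |s' - s| + t / (N j : ℝ)) atTop (𝓝 (|s' - s| + 0)) :=
    tendsto_const_nhds.add (tdiv0 ht hN)
  have h3 : Tendsto (fun j : ℕ => R' * (2 * C * ε₁ + C * K * (|s' - s| + t / (N j : ℝ))))
      atTop (𝓝 (R' * (2 * C * ε₁ + C * K * (|s' - s| + 0)))) :=
    ((h0.const_mul (C * K)).const_add (2 * C * ε₁)).const_mul R'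
  have hle := le_of_tendsto_of_tendsto hTd.abs h3 hbound
  have ha1 : C * R' * ε₁ ≤ ε / 8 := by
    rw [hε₁]; exact small_div_le (by positivity) hε
  have ha2 : C * R' * K * (ε / (8 * (C * R' * K + 1))) ≤ ε / 8 :=
    small_div_le (by positivity) hε
  have hQ : (0:ℝ) ≤ C * R' * K := by positivity
  have e2 : (C * R' * K) * |s' - s| ≤ (C * R' * K) * (ε / (8 * (C * R' * K + 1))) :=
    mul_le_mul_of_nonneg_left (hss'.le.trans (min_le_right _ _)) hQ
  have e1 : R' * (2 * C * ε₁ + C * K * (|s' - s| + 0))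
      = 2 * (C * R' * ε₁) + (C * R' * K) * |s' - s| := by ring
  rw [e1] at hle
  clear_value R' C ε₁ K δ
  have hfin : 2 * (C * R' * ε₁) + C * R' * K * |s' - s| < ε := by linarith
  exact lt_of_le_of_lt hle hfin

lemma card_mul_le (ht : 0 < t) {Nj : ℕ} {mlo mhi : ℕ} {m : ℝ} (hm : 0 ≤ m)
    (hhi : (mhi : ℝ) * t / Nj ≤ m) :
    ((mhi - mlo : ℕ) : ℝ) * (t / Nj) ≤ m := by
  rcases Nat.eq_zero_or_pos Nj with h0 | h0
  · subst h0; simp [hm]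
  have hN' : (0:ℝ) < Nj := by exact_mod_cast h0
  have h1 : ((mhi - mlo : ℕ) : ℝ) ≤ (mhi : ℝ) := by
    exact_mod_cast Nat.sub_le mhi mlo
  calc ((mhi - mlo : ℕ) : ℝ) * (t / Nj) ≤ (mhi : ℝ) * (t / Nj) :=
        mul_le_mul_of_nonneg_right h1 (by positivity)
    _ = (mhi : ℝ) * t / Nj := by ring
    _ ≤ m := hhi

lemma cint_le (hM : 1 ≤ M) (hF : MemFClass F M a) (ht : 0 < t)
    (hN : Tendsto N atTop atTop)
    (HT : ∀ s : ℝ, 0 ≤ s → ∀ g ∈ Φ, ∀ φ ∈ Ψ,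
      Tendsto (fun j => φ ((F (t / N j) ^ ⌊(N j : ℝ) * (s / t)⌋₊) g)) atTop (𝓝 (T s g φ)))
    {f y : X} (hf : f ∈ Φ) (hd : DerivAtZero F f y) (hy : y ∈ Φ)
    {φ : StrongDual ℝ X} (hφ : φ ∈ Ψ) {l m : ℝ} (hl : 0 ≤ l) (hlm : l ≤ m) :
    T m f φ - T l f φ = ∫ r in l..m, T r y φ := by
  have hm : 0 ≤ m := hl.trans hlm
  have hA : Tendsto (fun j => φ ((F (t / N j) ^ ⌊(N j : ℝ) * (m / t)⌋₊) f)
      - φ ((F (t / N j) ^ ⌊(N j : ℝ) * (l / t)⌋₊) f)) atTop (𝓝 (T m f φ - T l f φ)) :=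
    (HT m hm f hf φ hφ).sub (HT l hl f hf φ hφ)
  have hS := riemann hM hF ht hN HT hy hφ hl hlm
  have hMpos : (0:ℝ) < M := lt_of_lt_of_le one_pos hM
  have hCpos : (0:ℝ) < M * Real.exp (|a| * m) := by positivity
  have herr : Tendsto (fun j => (φ ((F (t / N j) ^ ⌊(N j : ℝ) * (m / t)⌋₊) f)
      - φ ((F (t / N j) ^ ⌊(N j : ℝ) * (l / t)⌋₊) f))
      - (t / (N j : ℝ)) * ∑ p ∈ Finset.Ico ⌊(N j : ℝ) * (l / t)⌋₊ ⌊(N j : ℝ) * (m / t)⌋₊,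
          φ ((F (t / N j) ^ p) y)) atTop (𝓝 0) := by
    rw [NormedAddCommGroup.tendsto_nhds_zero]
    intro ε hε
    have hPpos : (0:ℝ) ≤ ‖φ‖ * (M * Real.exp (|a| * m)) * m := by positivity
    have hε' : 0 < ε / (‖φ‖ * (M * Real.exp (|a| * m)) * m + 1) := by positivity
    obtain ⟨δ', hδ'pos, hδ'⟩ := deriv_eps hF.1 hd hε'
    filter_upwards [hN.eventually_ge_atTop 1,
      (tdiv0 ht hN).eventually (gt_mem_nhds hδ'pos)] with j hj hjδ
    have hN' : (0:ℝ) < N j := by exact_mod_cast hj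
    have htN : 0 < t / (N j : ℝ) := by positivity
    have hmlmm : ⌊(N j : ℝ) * (l / t)⌋₊ ≤ ⌊(N j : ℝ) * (m / t)⌋₊ := by
      apply Nat.floor_le_floor
      have h : l / t ≤ m / t := by gcongr
      exact mul_le_mul_of_nonneg_left h (Nat.cast_nonneg _)
    have hid : φ ((F (t / N j) ^ ⌊(N j : ℝ) * (m / t)⌋₊) f)
          - φ ((F (t / N j) ^ ⌊(N j : ℝ) * (l / t)⌋₊) f)
          - (t / (N j : ℝ)) * ∑ p ∈ Finset.Ico ⌊(N j : ℝ) * (l / t)⌋₊ ⌊(N j : ℝ) * (m / t)⌋₊,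
              φ ((F (t / N j) ^ p) y)
        = ∑ p ∈ Finset.Ico ⌊(N j : ℝ) * (l / t)⌋₊ ⌊(N j : ℝ) * (m / t)⌋₊,
            φ ((F (t / N j) ^ p) (F (t / N j) f - f - (t / (N j : ℝ)) • y)) := by
      rw [← map_sub φ, telescope (F (t / N j)) f hmlmm, map_sum, Finset.mul_sum,
        ← Finset.sum_sub_distrib]
      refine Finset.sum_congr rfl fun p hp => ?_
      simp only [map_sub, _root_.map_smul, smul_eq_mul]
      try ring
    rw [hid, Real.norm_eq_abs]
    have hterm : ∀ p ∈ Finset.Ico ⌊(N j : ℝ) * (l / t)⌋₊ ⌊(N j : ℝ) * (m / t)⌋₊,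
        |φ ((F (t / N j) ^ p) (F (t / N j) f - f - (t / (N j : ℝ)) • y))|
          ≤ ‖φ‖ * ((M * Real.exp (|a| * m))
              * ((ε / (‖φ‖ * (M * Real.exp (|a| * m)) * m + 1)) * (t / (N j : ℝ)))) := by
      intro p hp
      rw [Finset.mem_Ico] at hp
      have hpm : (p : ℝ) * t / N j ≤ m := by
        have h1 : (p : ℝ) ≤ (⌊(N j : ℝ) * (m / t)⌋₊ : ℝ) := by exact_mod_cast hp.2.le
        calc (p : ℝ) * t / N j ≤ (⌊(N j : ℝ) * (m / t)⌋₊ : ℝ) * t / N j := by gcongr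
          _ ≤ m := floor_mul_div_le hm ht
      have h2 : ‖F (t / N j) f - f - (t / (N j : ℝ)) • y‖
          ≤ (ε / (‖φ‖ * (M * Real.exp (|a| * m)) * m + 1)) * (t / (N j : ℝ)) :=
        hδ' _ htN hjδ
      calc |φ ((F (t / N j) ^ p) (F (t / N j) f - f - (t / (N j : ℝ)) • y))|
          ≤ ‖φ‖ * ‖(F (t / N j) ^ p) (F (t / N j) f - f - (t / (N j : ℝ)) • y)‖ := by
            rw [← Real.norm_eq_abs]; exact φ.le_opNorm _
        _ ≤ ‖φ‖ * (‖F (t / N j) ^ p‖ * ‖F (t / N j) f - f - (t / (N j : ℝ)) • y‖) :=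
            mul_le_mul_of_nonneg_left (ContinuousLinearMap.le_opNorm _ _) (norm_nonneg _)
        _ ≤ ‖φ‖ * ((M * Real.exp (|a| * m))
              * ((ε / (‖φ‖ * (M * Real.exp (|a| * m)) * m + 1)) * (t / (N j : ℝ)))) := by
            refine mul_le_mul_of_nonneg_left ?_ (norm_nonneg _)
            exact mul_le_mul (pow_bound' hM hF ht hpm) h2 (norm_nonneg _) hCpos.le
    calc |∑ p ∈ Finset.Ico ⌊(N j : ℝ) * (l / t)⌋₊ ⌊(N j : ℝ) * (m / t)⌋₊,
            φ ((F (t / N j) ^ p) (F (t / N j) f - f - (t / (N j : ℝ)) • y))|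
        ≤ ∑ p ∈ Finset.Ico ⌊(N j : ℝ) * (l / t)⌋₊ ⌊(N j : ℝ) * (m / t)⌋₊,
            |φ ((F (t / N j) ^ p) (F (t / N j) f - f - (t / (N j : ℝ)) • y))| :=
          Finset.abs_sum_le_sum_abs _ _
      _ ≤ ((⌊(N j : ℝ) * (m / t)⌋₊ - ⌊(N j : ℝ) * (l / t)⌋₊ : ℕ) : ℝ)
            * (‖φ‖ * ((M * Real.exp (|a| * m))
              * ((ε / (‖φ‖ * (M * Real.exp (|a| * m)) * m + 1)) * (t / (N j : ℝ))))) := by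
          have := Finset.sum_le_card_nsmul _ _ _ hterm
          rwa [Nat.card_Ico, nsmul_eq_mul] at this
      _ = (‖φ‖ * (M * Real.exp (|a| * m))
              * (ε / (‖φ‖ * (M * Real.exp (|a| * m)) * m + 1)))
            * (((⌊(N j : ℝ) * (m / t)⌋₊ - ⌊(N j : ℝ) * (l / t)⌋₊ : ℕ) : ℝ) * (t / (N j : ℝ))) := by
          ring
      _ ≤ (‖φ‖ * (M * Real.exp (|a| * m))
              * (ε / (‖φ‖ * (M * Real.exp (|a| * m)) * m + 1))) * m := by
          refine mul_le_mul_of_nonneg_left ?_ (by positivity)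
          exact card_mul_le ht hm (floor_mul_div_le hm ht)
      _ = (‖φ‖ * (M * Real.exp (|a| * m)) * m)
            * (ε / (‖φ‖ * (M * Real.exp (|a| * m)) * m + 1)) := by ring
      _ < ε := small_div_lt hPpos hε
  have hcomb := herr.add hS
  rw [zero_add] at hcomb
  refine tendsto_nhds_unique hA (hcomb.congr fun j => by ring)

lemma cint (hM : 1 ≤ M) (hF : MemFClass F M a) (ht : 0 < t)
    (hN : Tendsto N atTop atTop)
    (HT : ∀ s : ℝ, 0 ≤ s → ∀ g ∈ Φ, ∀ φ ∈ Ψ,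
      Tendsto (fun j => φ ((F (t / N j) ^ ⌊(N j : ℝ) * (s / t)⌋₊) g)) atTop (𝓝 (T s g φ)))
    {f y : X} (hf : f ∈ Φ) (hd : DerivAtZero F f y) (hy : y ∈ Φ)
    {φ : StrongDual ℝ X} (hφ : φ ∈ Ψ) {l m : ℝ} (hl : 0 ≤ l) (hm : 0 ≤ m) :
    T m f φ - T l f φ = ∫ r in l..m, T r y φ := by
  rcases le_total l m with h | h
  · exact cint_le hM hF ht hN HT hf hd hy hφ hl h
  · have h2 := cint_le hM hF ht hN HT hf hd hy hφ hm h
    rw [intervalIntegral.integral_symm m l]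
    linarith

lemma dint_le (hM : 1 ≤ M) (hF : MemFClass F M a) (ht : 0 < t)
    (hN : Tendsto N atTop atTop)
    (HT : ∀ s : ℝ, 0 ≤ s → ∀ g ∈ Φ, ∀ φ ∈ Ψ,
      Tendsto (fun j => φ ((F (t / N j) ^ ⌊(N j : ℝ) * (s / t)⌋₊) g)) atTop (𝓝 (T s g φ)))
    {φ ψ : StrongDual ℝ X} (hφ : φ ∈ Ψ) (hd : AdjDerivAtZero F φ ψ) (hψ : ψ ∈ Ψ)
    {f : X} (hf : f ∈ Φ) {l m : ℝ} (hl : 0 ≤ l) (hlm : l ≤ m) :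
    T m f φ - T l f φ = ∫ r in l..m, T r f ψ := by
  have hm : 0 ≤ m := hl.trans hlm
  have hA : Tendsto (fun j => φ ((F (t / N j) ^ ⌊(N j : ℝ) * (m / t)⌋₊) f)
      - φ ((F (t / N j) ^ ⌊(N j : ℝ) * (l / t)⌋₊) f)) atTop (𝓝 (T m f φ - T l f φ)) :=
    (HT m hm f hf φ hφ).sub (HT l hl f hf φ hφ)
  have hS := riemann hM hF ht hN HT hf hψ hl hlm
  have hMpos : (0:ℝ) < M := lt_of_lt_of_le one_pos hM
  have hCpos : (0:ℝ) < M * Real.exp (|a| * m) := by positivity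
  have herr : Tendsto (fun j => (φ ((F (t / N j) ^ ⌊(N j : ℝ) * (m / t)⌋₊) f)
      - φ ((F (t / N j) ^ ⌊(N j : ℝ) * (l / t)⌋₊) f))
      - (t / (N j : ℝ)) * ∑ p ∈ Finset.Ico ⌊(N j : ℝ) * (l / t)⌋₊ ⌊(N j : ℝ) * (m / t)⌋₊,
          ψ ((F (t / N j) ^ p) f)) atTop (𝓝 0) := by
    rw [NormedAddCommGroup.tendsto_nhds_zero]
    intro ε hε
    have hPpos : (0:ℝ) ≤ (M * Real.exp (|a| * m)) * ‖f‖ * m := by positivity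
    have hε' : 0 < ε / ((M * Real.exp (|a| * m)) * ‖f‖ * m + 1) := by positivity
    obtain ⟨δ', hδ'pos, hδ'⟩ := adj_deriv_eps hF.1 hd hε'
    filter_upwards [hN.eventually_ge_atTop 1,
      (tdiv0 ht hN).eventually (gt_mem_nhds hδ'pos)] with j hj hjδ
    have hN' : (0:ℝ) < N j := by exact_mod_cast hj
    have htN : 0 < t / (N j : ℝ) := by positivity
    have hmlmm : ⌊(N j : ℝ) * (l / t)⌋₊ ≤ ⌊(N j : ℝ) * (m / t)⌋₊ := by
      apply Nat.floor_le_floor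
      have h : l / t ≤ m / t := by gcongr
      exact mul_le_mul_of_nonneg_left h (Nat.cast_nonneg _)
    have hid : φ ((F (t / N j) ^ ⌊(N j : ℝ) * (m / t)⌋₊) f)
          - φ ((F (t / N j) ^ ⌊(N j : ℝ) * (l / t)⌋₊) f)
          - (t / (N j : ℝ)) * ∑ p ∈ Finset.Ico ⌊(N j : ℝ) * (l / t)⌋₊ ⌊(N j : ℝ) * (m / t)⌋₊,
              ψ ((F (t / N j) ^ p) f)
        = ∑ p ∈ Finset.Ico ⌊(N j : ℝ) * (l / t)⌋₊ ⌊(N j : ℝ) * (m / t)⌋₊,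
            ((adjCLM (F (t / N j)) φ - φ - (t / (N j : ℝ)) • ψ) ((F (t / N j) ^ p) f)) := by
      rw [← telescope_sum (fun p => φ ((F (t / N j) ^ p) f)) hmlmm, Finset.mul_sum,
        ← Finset.sum_sub_distrib]
      refine Finset.sum_congr rfl fun p hp => ?_
      have hps : (F (t / N j) ^ (p+1)) f = (F (t / N j)) ((F (t / N j) ^ p) f) := by
        rw [pow_succ']; rfl
      simp only [ContinuousLinearMap.sub_apply, ContinuousLinearMap.smul_apply,
        smul_eq_mul, hps]
      have hadj : (adjCLM (F (t / N j)) φ) ((F (t / N j) ^ p) f)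
          = φ ((F (t / N j)) ((F (t / N j) ^ p) f)) := rfl
      rw [hadj]
    rw [hid, Real.norm_eq_abs]
    have hterm : ∀ p ∈ Finset.Ico ⌊(N j : ℝ) * (l / t)⌋₊ ⌊(N j : ℝ) * (m / t)⌋₊,
        |(adjCLM (F (t / N j)) φ - φ - (t / (N j : ℝ)) • ψ) ((F (t / N j) ^ p) f)|
          ≤ ((ε / ((M * Real.exp (|a| * m)) * ‖f‖ * m + 1)) * (t / (N j : ℝ)))
              * ((M * Real.exp (|a| * m)) * ‖f‖) := by
      intro p hp
      rw [Finset.mem_Ico] at hp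
      have hpm : (p : ℝ) * t / N j ≤ m := by
        have h1 : (p : ℝ) ≤ (⌊(N j : ℝ) * (m / t)⌋₊ : ℝ) := by exact_mod_cast hp.2.le
        calc (p : ℝ) * t / N j ≤ (⌊(N j : ℝ) * (m / t)⌋₊ : ℝ) * t / N j := by gcongr
          _ ≤ m := floor_mul_div_le hm ht
      have h2 : ‖adjCLM (F (t / N j)) φ - φ - (t / (N j : ℝ)) • ψ‖
          ≤ (ε / ((M * Real.exp (|a| * m)) * ‖f‖ * m + 1)) * (t / (N j : ℝ)) :=
        hδ' _ htN hjδ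
      have h3 : ‖(F (t / N j) ^ p) f‖ ≤ (M * Real.exp (|a| * m)) * ‖f‖ :=
        ((F (t / N j) ^ p).le_opNorm f).trans
          (mul_le_mul_of_nonneg_right (pow_bound' hM hF ht hpm) (norm_nonneg _))
      calc |(adjCLM (F (t / N j)) φ - φ - (t / (N j : ℝ)) • ψ) ((F (t / N j) ^ p) f)|
          ≤ ‖adjCLM (F (t / N j)) φ - φ - (t / (N j : ℝ)) • ψ‖ * ‖(F (t / N j) ^ p) f‖ := by
            rw [← Real.norm_eq_abs]
            exact ContinuousLinearMap.le_opNorm _ _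
        _ ≤ ((ε / ((M * Real.exp (|a| * m)) * ‖f‖ * m + 1)) * (t / (N j : ℝ)))
              * ((M * Real.exp (|a| * m)) * ‖f‖) :=
            mul_le_mul h2 h3 (norm_nonneg _) (by positivity)
    calc |∑ p ∈ Finset.Ico ⌊(N j : ℝ) * (l / t)⌋₊ ⌊(N j : ℝ) * (m / t)⌋₊,
            ((adjCLM (F (t / N j)) φ - φ - (t / (N j : ℝ)) • ψ) ((F (t / N j) ^ p) f))|
        ≤ ∑ p ∈ Finset.Ico ⌊(N j : ℝ) * (l / t)⌋₊ ⌊(N j : ℝ) * (m / t)⌋₊,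
            |(adjCLM (F (t / N j)) φ - φ - (t / (N j : ℝ)) • ψ) ((F (t / N j) ^ p) f)| :=
          Finset.abs_sum_le_sum_abs _ _
      _ ≤ ((⌊(N j : ℝ) * (m / t)⌋₊ - ⌊(N j : ℝ) * (l / t)⌋₊ : ℕ) : ℝ)
            * (((ε / ((M * Real.exp (|a| * m)) * ‖f‖ * m + 1)) * (t / (N j : ℝ)))
              * ((M * Real.exp (|a| * m)) * ‖f‖)) := by
          have := Finset.sum_le_card_nsmul _ _ _ hterm
          rwa [Nat.card_Ico, nsmul_eq_mul] at this
      _ = ((M * Real.exp (|a| * m)) * ‖f‖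
              * (ε / ((M * Real.exp (|a| * m)) * ‖f‖ * m + 1)))
            * (((⌊(N j : ℝ) * (m / t)⌋₊ - ⌊(N j : ℝ) * (l / t)⌋₊ : ℕ) : ℝ) * (t / (N j : ℝ))) := by
          ring
      _ ≤ ((M * Real.exp (|a| * m)) * ‖f‖
              * (ε / ((M * Real.exp (|a| * m)) * ‖f‖ * m + 1))) * m := by
          refine mul_le_mul_of_nonneg_left ?_ (by positivity)
          exact card_mul_le ht hm (floor_mul_div_le hm ht)
      _ = ((M * Real.exp (|a| * m)) * ‖f‖ * m)
            * (ε / ((M * Real.exp (|a| * m)) * ‖f‖ * m + 1)) := by ring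
      _ < ε := small_div_lt hPpos hε
  have hcomb := herr.add hS
  rw [zero_add] at hcomb
  refine tendsto_nhds_unique hA (hcomb.congr fun j => by ring)

lemma dint (hM : 1 ≤ M) (hF : MemFClass F M a) (ht : 0 < t)
    (hN : Tendsto N atTop atTop)
    (HT : ∀ s : ℝ, 0 ≤ s → ∀ g ∈ Φ, ∀ φ ∈ Ψ,
      Tendsto (fun j => φ ((F (t / N j) ^ ⌊(N j : ℝ) * (s / t)⌋₊) g)) atTop (𝓝 (T s g φ)))
    {φ ψ : StrongDual ℝ X} (hφ : φ ∈ Ψ) (hd : AdjDerivAtZero F φ ψ) (hψ : ψ ∈ Ψ)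
    {f : X} (hf : f ∈ Φ) {l m : ℝ} (hl : 0 ≤ l) (hm : 0 ≤ m) :
    T m f φ - T l f φ = ∫ r in l..m, T r f ψ := by
  rcases le_total l m with h | h
  · exact dint_le hM hF ht hN HT hφ hd hψ hf hl h
  · have h2 := dint_le hM hF ht hN HT hφ hd hψ hf hm h
    rw [intervalIntegral.integral_symm m l]
    linarith

/-- Generic FTC for our setting. -/
lemma ftc {G ρ : ℝ → ℝ} (hρ : ContinuousOn ρ (Set.Ici 0))
    (hint : ∀ l m : ℝ, 0 ≤ l → 0 ≤ m → G m - G l = ∫ r in l..m, ρ r)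
    {s : ℝ} (hs : 0 ≤ s) : HasDerivWithinAt G (ρ s) (Set.Ici (0:ℝ)) s := by
  rw [hasDerivWithinAt_iff_tendsto_slope, Metric.tendsto_nhdsWithin_nhds]
  intro ε hε
  have hc : ContinuousWithinAt ρ (Set.Ici 0) s := hρ s hs
  rw [Metric.continuousWithinAt_iff] at hc
  obtain ⟨δ, hδpos, hδ⟩ := hc (ε/2) (by positivity)
  refine ⟨δ, hδpos, fun s' hs'mem hdist => ?_⟩
  obtain ⟨hs'0, hne⟩ := hs'mem
  have hs'0 : (0:ℝ) ≤ s' := hs'0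
  have hne' : s' ≠ s := by simpa using hne
  rw [Real.dist_eq] at hdist
  have hsub : s' - s ≠ 0 := sub_ne_zero.2 hne'
  have hintg : IntervalIntegrable ρ volume s s' := by
    refine (hρ.mono ?_).intervalIntegrable
    intro r hr
    exact le_trans (le_min hs hs'0) hr.1
  have hGsub : G s' - G s = ∫ r in s..s', ρ r := hint s s' hs hs'0
  have hdiffEq : (∫ r in s..s', (ρ r - ρ s)) = (G s' - G s) - (s' - s) * ρ s := by
    rw [intervalIntegral.integral_sub hintg intervalIntegrable_const,
      intervalIntegral.integral_const, smul_eq_mul, ← hGsub]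
  have hbnd : ∀ r ∈ Set.uIoc s s', ‖ρ r - ρ s‖ ≤ ε/2 := by
    intro r hr
    have hr0 : (0:ℝ) ≤ r := by
      rcases le_total s s' with hc' | hc'
      · rw [Set.uIoc_of_le hc'] at hr; linarith [hr.1]
      · rw [Set.uIoc, min_eq_right hc', max_eq_left hc'] at hr; linarith [hr.1]
    have hrs : |r - s| ≤ |s' - s| := by
      rcases le_total s s' with hc' | hc'
      · rw [Set.uIoc_of_le hc'] at hr
        have h1 := le_abs_self (s' - s)
        rw [abs_sub_le_iff]
        constructor <;> [linarith [hr.2]; linarith [hr.1]]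
      · rw [Set.uIoc, min_eq_right hc', max_eq_left hc'] at hr
        have h1 : s - s' ≤ |s' - s| := by rw [abs_sub_comm]; exact le_abs_self _
        rw [abs_sub_le_iff]
        constructor <;> [linarith [hr.2]; linarith [hr.1]]
    have := hδ (Set.mem_Ici.2 hr0) (by rw [Real.dist_eq]; exact lt_of_le_of_lt hrs hdist)
    rw [Real.dist_eq] at this
    rw [Real.norm_eq_abs]
    exact this.le
  have hI := intervalIntegral.norm_integral_le_of_norm_le_const hbnd
  rw [Real.norm_eq_abs] at hI
  have key : slope G s s' - ρ s = (∫ r in s..s', (ρ r - ρ s)) / (s' - s) := by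
    rw [slope_def_field, hdiffEq]
    field_simp
  have habs : 0 < |s' - s| := abs_pos.2 hsub
  rw [Real.dist_eq]
  calc |slope G s s' - ρ s| = |∫ r in s..s', (ρ r - ρ s)| / |s' - s| := by
        rw [key, abs_div]
    _ ≤ (ε/2 * |s' - s|) / |s' - s| := by gcongr
    _ = ε/2 := by field_simp
    _ < ε := by linarith

lemma abound (hM : 1 ≤ M) (hF : MemFClass F M a) (ht : 0 < t)
    (hN : Tendsto N atTop atTop)
    (HT : ∀ s : ℝ, 0 ≤ s → ∀ g ∈ Φ, ∀ φ ∈ Ψ,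
      Tendsto (fun j => φ ((F (t / N j) ^ ⌊(N j : ℝ) * (s / t)⌋₊) g)) atTop (𝓝 (T s g φ)))
    {g : X} (hg : g ∈ Φ) {φ : StrongDual ℝ X} (hφ : φ ∈ Ψ) {s : ℝ} (hs : 0 ≤ s) :
    |T s g φ| ≤ M * Real.exp (a * s) * ‖g‖ * ‖φ‖ := by
  have h1 := (HT s hs g hg φ hφ).abs
  have h0 := (mtN ht hN hs).const_mul a
  have h0' : Tendsto (fun j => Real.exp (a * ((⌊(N j : ℝ) * (s / t)⌋₊ : ℝ) * t / N j)))
      atTop (𝓝 (Real.exp (a * s))) := (Real.continuous_exp.tendsto _).comp h0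
  have h2 : Tendsto (fun j => M * Real.exp (a * ((⌊(N j : ℝ) * (s / t)⌋₊ : ℝ) * t / N j))
      * ‖g‖ * ‖φ‖) atTop (𝓝 (M * Real.exp (a * s) * ‖g‖ * ‖φ‖)) :=
    ((h0'.const_mul M).mul_const ‖g‖).mul_const ‖φ‖
  refine le_of_tendsto_of_tendsto' h1 h2 (fun j => ?_)
  calc |φ ((F (t / N j) ^ ⌊(N j : ℝ) * (s / t)⌋₊) g)|
      ≤ ‖φ‖ * ‖(F (t / N j) ^ ⌊(N j : ℝ) * (s / t)⌋₊) g‖ := by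
        rw [← Real.norm_eq_abs]; exact φ.le_opNorm _
    _ ≤ ‖φ‖ * (‖F (t / N j) ^ ⌊(N j : ℝ) * (s / t)⌋₊‖ * ‖g‖) :=
        mul_le_mul_of_nonneg_left (ContinuousLinearMap.le_opNorm _ _) (norm_nonneg _)
    _ ≤ ‖φ‖ * ((M * Real.exp (a * ((⌊(N j : ℝ) * (s / t)⌋₊ : ℝ) * t / N j))) * ‖g‖) := by
        refine mul_le_mul_of_nonneg_left ?_ (norm_nonneg _)
        exact mul_le_mul_of_nonneg_right (pow_bound_sharp hM hF ht _ _) (norm_nonneg _)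
    _ = M * Real.exp (a * ((⌊(N j : ℝ) * (s / t)⌋₊ : ℝ) * t / N j)) * ‖g‖ * ‖φ‖ := by ring

lemma bcont (hM : 1 ≤ M) (hF : MemFClass F M a) (ht : 0 < t)
    (hN : Tendsto N atTop atTop)
    (HT : ∀ s : ℝ, 0 ≤ s → ∀ g ∈ Φ, ∀ φ ∈ Ψ,
      Tendsto (fun j => φ ((F (t / N j) ^ ⌊(N j : ℝ) * (s / t)⌋₊) g)) atTop (𝓝 (T s g φ)))
    {g : X} (hg : g ∈ Φ) {φ : StrongDual ℝ X} (hφ : φ ∈ Ψ) :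
    ContinuousOn (fun s => T s g φ) (Set.Ici (0:ℝ)) := by
  intro s hs
  rw [Metric.continuousWithinAt_iff]
  intro ε hε
  obtain ⟨δ, hδpos, hδ⟩ := key1 hM hF ht hN HT hg ‖φ‖ hs hε
  exact ⟨δ, hδpos, fun s' hs' hd =>
    by rw [Real.dist_eq]; exact hδ s' hs' (by rwa [Real.dist_eq] at hd) φ hφ le_rfl⟩

lemma mem_uIoc_facts {s u r : ℝ} (hs : 0 ≤ s) (hu : 0 ≤ u) (hr : r ∈ Set.uIoc s u) :
    0 ≤ r ∧ |r - s| ≤ |u - s| := by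
  rcases le_total s u with hc | hc
  · rw [Set.uIoc_of_le hc] at hr
    have h1 := le_abs_self (u - s)
    constructor
    · linarith [hr.1]
    · rw [abs_sub_le_iff]
      constructor <;> [linarith [hr.2]; linarith [hr.1]]
  · rw [Set.uIoc, min_eq_right hc, max_eq_left hc] at hr
    have h1 : s - u ≤ |u - s| := by rw [abs_sub_comm]; exact le_abs_self _
    constructor
    · linarith [hr.1]
    · rw [abs_sub_le_iff]
      constructor <;> [linarith [hr.2]; linarith [hr.1]]

lemma small_div_le' {P c ε : ℝ} (hP : 0 ≤ P) (hc : 0 < c) (hε : 0 < ε) :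
    P * (ε / (c * (P + 1))) ≤ ε / c := by
  rw [mul_div_assoc', div_le_div_iff₀ (by positivity) hc]
  nlinarith [mul_nonneg (mul_nonneg hc.le hP) hε.le, mul_nonneg hc.le hε.le]

lemma floor_mul_div_le2 {N : ℕ} {s : ℝ} (hs : 0 ≤ s) (ht : 0 < t) :
    (⌊(N : ℝ) * s⌋₊ : ℝ) * t / N ≤ s * t := by
  have h := floor_mul_div_le (N := N) (x := s * t) (by positivity) ht
  rwa [mul_div_cancel_right₀ s ht.ne'] at h

lemma part1 (hM : 1 ≤ M) (hF : MemFClass F M a) (ht : 0 < t)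
    (n : ℕ → ℕ) (hn : StrictMono n)
    (Φ : Submodule ℝ X) (hΦs : TopologicalSpace.IsSeparable (Φ : Set X))
    (Ψ : Submodule ℝ (StrongDual ℝ X))
    (hΨs : TopologicalSpace.IsSeparable (Ψ : Set (StrongDual ℝ X))) :
    ∃ k : ℕ → ℕ, StrictMono k ∧
      ∀ g ∈ Φ, ∀ φ ∈ Ψ, ∀ s : ℝ, 0 < s →
        ∃ L : ℝ, Tendsto (fun j : ℕ => φ (((F (t / (n (k j)))) ^ ⌊(n (k j) : ℝ) * s⌋₊) g))
          atTop (𝓝 L) := by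
  have hMpos : (0:ℝ) < M := lt_of_lt_of_le one_pos hM
  obtain ⟨cΦ, hcΦc, hcΦd⟩ := hΦs
  obtain ⟨cΨ, hcΨc, hcΨd⟩ := hΨs
  have hD : Dense {ψ : X | ∃ y, DerivAtZero F ψ y} := hF.2.2
  have hchoice : ∀ (q : X) (i : ℕ), ∃ d, (∃ y, DerivAtZero F d y) ∧ dist q d < 1/(i+1) := by
    intro q i
    obtain ⟨d, hd1, hd2⟩ := hD.exists_dist_lt q (show (0:ℝ) < 1/(i+1) by positivity)
    exact ⟨d, hd1, hd2⟩
  choose dfun hdfunD hdfun using hchoice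
  have hcΦ'c : (Set.image2 dfun cΦ (Set.univ : Set ℕ)).Countable :=
    hcΦc.image2 Set.countable_univ _
  have hcΦ'D : ∀ x ∈ Set.image2 dfun cΦ (Set.univ : Set ℕ), ∃ y, DerivAtZero F x y := by
    rintro x ⟨q, hq, i, -, rfl⟩
    exact hdfunD q i
  have hΦsub : (Φ : Set X) ⊆ closure (Set.image2 dfun cΦ (Set.univ : Set ℕ)) := by
    intro g hg
    rw [Metric.mem_closure_iff]
    intro ε hε
    have hgc := hcΦd hg
    rw [Metric.mem_closure_iff] at hgc
    obtain ⟨q, hq, hqd⟩ := hgc (ε/2) (by positivity)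
    obtain ⟨i, hi⟩ := exists_nat_one_div_lt (show (0:ℝ) < ε/2 by positivity)
    refine ⟨dfun q i, Set.mem_image2_of_mem hq (Set.mem_univ i), ?_⟩
    calc dist g (dfun q i) ≤ dist g q + dist q (dfun q i) := dist_triangle _ _ _
      _ < ε/2 + 1/(i+1) := add_lt_add hqd (hdfun q i)
      _ < ε/2 + ε/2 := by
          have : (1:ℝ)/(i+1) < ε/2 := by exact_mod_cast hi
          linarith
      _ = ε := by ring
  haveI := hcΦ'c.to_subtype
  haveI := hcΨc.to_subtype
  set I : Type _ := ↥(Set.image2 dfun cΦ (Set.univ : Set ℕ)) × ↥cΨ × ℚ with hI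
  set v : ℕ → I → ℝ := fun j i =>
    (i.2.1 : StrongDual ℝ X) ((F (t / (n j)) ^ ⌊(n j : ℝ) * ((i.2.2 : ℚ) : ℝ)⌋₊) (i.1 : X))
    with hv
  set Cb : I → ℝ := fun i => ‖(i.2.1 : StrongDual ℝ X)‖
      * (M * Real.exp (|a| * (max ((i.2.2 : ℚ) : ℝ) 0 * t))) * ‖(i.1 : X)‖ with hCb
  have hvmem : ∀ j, v j ∈ Set.univ.pi (fun i : I => Set.Icc (-(Cb i)) (Cb i)) := by
    intro j i _
    rw [Set.mem_Icc, ← abs_le]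
    have hexp : (⌊(n j : ℝ) * ((i.2.2 : ℚ) : ℝ)⌋₊ : ℝ) * t / (n j)
        ≤ max ((i.2.2 : ℚ) : ℝ) 0 * t := by
      rcases le_or_gt 0 ((i.2.2 : ℚ) : ℝ) with hq | hq
      · refine (floor_mul_div_le2 hq ht).trans ?_
        exact mul_le_mul_of_nonneg_right (le_max_left _ _) ht.le
      · have h0 : (n j : ℝ) * ((i.2.2 : ℚ) : ℝ) ≤ 0 :=
          mul_nonpos_of_nonneg_of_nonpos (Nat.cast_nonneg _) hq.le
        rw [Nat.floor_of_nonpos h0]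
        simp only [Nat.cast_zero, zero_mul, zero_div]
        positivity
    calc |(i.2.1 : StrongDual ℝ X)
            ((F (t / (n j)) ^ ⌊(n j : ℝ) * ((i.2.2 : ℚ) : ℝ)⌋₊) (i.1 : X))|
        ≤ ‖(i.2.1 : StrongDual ℝ X)‖
            * ‖(F (t / (n j)) ^ ⌊(n j : ℝ) * ((i.2.2 : ℚ) : ℝ)⌋₊) (i.1 : X)‖ := by
          rw [← Real.norm_eq_abs]
          exact ContinuousLinearMap.le_opNorm _ _
      _ ≤ ‖(i.2.1 : StrongDual ℝ X)‖
            * (‖F (t / (n j)) ^ ⌊(n j : ℝ) * ((i.2.2 : ℚ) : ℝ)⌋₊‖ * ‖(i.1 : X)‖) :=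
          mul_le_mul_of_nonneg_left (ContinuousLinearMap.le_opNorm _ _) (norm_nonneg _)
      _ ≤ ‖(i.2.1 : StrongDual ℝ X)‖
            * ((M * Real.exp (|a| * (max ((i.2.2 : ℚ) : ℝ) 0 * t))) * ‖(i.1 : X)‖) := by
          refine mul_le_mul_of_nonneg_left ?_ (norm_nonneg _)
          exact mul_le_mul_of_nonneg_right (pow_bound' hM hF ht hexp) (norm_nonneg _)
      _ = Cb i := by rw [hCb]; ring
  have hcomp : IsCompact (Set.univ.pi fun i : I => Set.Icc (-(Cb i)) (Cb i)) :=
    isCompact_univ_pi fun i => isCompact_Icc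
  obtain ⟨L, -, k, hkmono, hkconv⟩ := hcomp.isSeqCompact hvmem
  rw [tendsto_pi_nhds] at hkconv
  refine ⟨k, hkmono, ?_⟩
  intro g hg φ hφ s hs
  have hN : Tendsto (fun j => n (k j)) atTop atTop :=
    tendsto_atTop_mono (fun j => le_trans hkmono.le_apply hn.le_apply) tendsto_id
  suffices hcauchy : CauchySeq (fun j => φ ((F (t/(n (k j))) ^ ⌊(n (k j):ℝ) * s⌋₊) g)) by
    obtain ⟨L', hL'⟩ := cauchySeq_tendsto_of_complete hcauchy
    exact ⟨L', hL'⟩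
  rw [Metric.cauchySeq_iff]
  intro ε hε
  have hCpos : (0:ℝ) < M * Real.exp (|a| * ((s+1)*t)) := by positivity
  set C := M * Real.exp (|a| * ((s+1)*t)) with hCdef
  -- choose g'
  have hε₁ : (0:ℝ) < ε/(24*(C*‖φ‖+1)) := by positivity
  obtain ⟨g', hg'mem, hgg'⟩ := Metric.mem_closure_iff.1 (hΦsub hg) _ hε₁
  rw [dist_eq_norm] at hgg'
  obtain ⟨y', hy'⟩ := hcΦ'D g' hg'mem
  obtain ⟨δ₀, hδ₀pos, hδ₀⟩ := deriv_eps hF.1 hy' one_pos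
  set K := ‖y'‖ + 1 with hKdef
  have hKpos : (0:ℝ) < K := by positivity
  have hKb : ∀ h : ℝ, 0 < h → h < δ₀ → ‖F h g' - g'‖ ≤ h * K := by
    intro h hh hhδ
    have h1 := hδ₀ h hh hhδ
    calc ‖F h g' - g'‖ = ‖(F h g' - g' - h • y') + h • y'‖ := by abel_nf
      _ ≤ ‖F h g' - g' - h • y'‖ + ‖h • y'‖ := norm_add_le _ _
      _ ≤ 1 * h + h * ‖y'‖ := by
          refine add_le_add h1 ?_
          rw [norm_smul, Real.norm_of_nonneg hh.le]
      _ = h * K := by rw [hKdef]; ring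
  -- choose φ'
  have hε₂ : (0:ℝ) < ε/(24*(C*‖g'‖+1)) := by positivity
  obtain ⟨φ', hφ'mem, hφφ'⟩ := Metric.mem_closure_iff.1 (hcΨd hφ) _ hε₂
  rw [dist_eq_norm] at hφφ'
  -- choose rational qs
  set ζ := min s (ε/(24*(‖φ‖*C*K*t+1))) with hζdef
  have hζpos : 0 < ζ := lt_min hs (by positivity)
  obtain ⟨qs, hqs1, hqs2⟩ := exists_rat_btwn (show s - ζ < s by linarith)
  have hζs : ζ ≤ s := min_le_left _ _
  have hqs0 : (0:ℝ) ≤ (qs:ℝ) := by linarith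
  have hqss : (qs:ℝ) ≤ s := hqs2.le
  have hsqs : |s - (qs:ℝ)| < ζ := by
    rw [abs_of_nonneg (by linarith)]
    linarith
  -- the reference coordinate
  have hwc := (hkconv (⟨g', hg'mem⟩, ⟨φ', hφ'mem⟩, qs)).cauchySeq
  rw [Metric.cauchySeq_iff] at hwc
  obtain ⟨J₂, hJ₂⟩ := hwc (ε/3) (by positivity)
  -- eventual closeness of u to w
  have h3 : Tendsto (fun j => ‖φ‖*C*K*(t/(n (k j):ℝ))) atTop (𝓝 0) := by
    simpa using (tdiv0 ht hN).const_mul (‖φ‖*C*K)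
  have hevent : ∀ᶠ j in atTop, (1 ≤ n (k j) ∧ t/(n (k j):ℝ) < δ₀)
      ∧ ‖φ‖*C*K*(t/(n (k j):ℝ)) ≤ ε/24 :=
    ((hN.eventually_ge_atTop 1).and
      ((tdiv0 ht hN).eventually (gt_mem_nhds hδ₀pos))).and
      (h3.eventually_le_const (by positivity))
  obtain ⟨J₁, hJ₁⟩ := eventually_atTop.1 hevent
  have hclose : ∀ j, J₁ ≤ j →
      |φ ((F (t/(n (k j))) ^ ⌊(n (k j):ℝ) * s⌋₊) g)
        - v (k j) (⟨g', hg'mem⟩, ⟨φ', hφ'mem⟩, qs)| ≤ ε/4 := by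
    intro j hj
    obtain ⟨⟨hj1, hjδ⟩, hj24⟩ := hJ₁ j hj
    have hN' : (0:ℝ) < (n (k j) : ℝ) := by exact_mod_cast hj1
    have htN : 0 < t / (n (k j) : ℝ) := by positivity
    have hwv : v (k j) (⟨g', hg'mem⟩, ⟨φ', hφ'mem⟩, qs)
        = φ' ((F (t/(n (k j))) ^ ⌊(n (k j):ℝ) * (qs:ℝ)⌋₊) g') := rfl
    rw [hwv]
    -- decompose
    have hdec : φ ((F (t/(n (k j))) ^ ⌊(n (k j):ℝ) * s⌋₊) g)
          - φ' ((F (t/(n (k j))) ^ ⌊(n (k j):ℝ) * (qs:ℝ)⌋₊) g')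
        = (φ ((F (t/(n (k j))) ^ ⌊(n (k j):ℝ) * s⌋₊) g)
            - φ ((F (t/(n (k j))) ^ ⌊(n (k j):ℝ) * (qs:ℝ)⌋₊) g))
          + φ ((F (t/(n (k j))) ^ ⌊(n (k j):ℝ) * (qs:ℝ)⌋₊) (g - g'))
          + (φ - φ') ((F (t/(n (k j))) ^ ⌊(n (k j):ℝ) * (qs:ℝ)⌋₊) g') := by
      simp only [map_sub, ContinuousLinearMap.sub_apply]
      ring
    rw [hdec]
    -- bound each of the three terms
    have hbC : ∀ p : ℕ, (p:ℝ) * t / (n (k j)) ≤ (s+1)*t → ‖F (t/(n (k j))) ^ p‖ ≤ C :=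
      fun p hp => pow_bound' hM hF ht hp
    have hms : (⌊(n (k j):ℝ) * s⌋₊ : ℝ) * t / (n (k j)) ≤ (s+1)*t := by
      refine (floor_mul_div_le2 hs.le ht).trans ?_
      nlinarith
    have hmq : (⌊(n (k j):ℝ) * (qs:ℝ)⌋₊ : ℝ) * t / (n (k j)) ≤ (s+1)*t := by
      refine (floor_mul_div_le2 hqs0 ht).trans ?_
      nlinarith
    have ht1 := core_est hM hF ht (N := n (k j)) g g' φ
      (m := ⌊(n (k j):ℝ) * s⌋₊) (m' := ⌊(n (k j):ℝ) * (qs:ℝ)⌋₊)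
      (c := (s+1)*t) (K := K) hms hmq (hKb _ htN hjδ)
    -- floor difference bound
    have hfl : |(⌊(n (k j):ℝ) * s⌋₊ : ℝ) - (⌊(n (k j):ℝ) * (qs:ℝ)⌋₊ : ℝ)|
        ≤ (n (k j):ℝ) * |s - (qs:ℝ)| + 1 := by
      refine (floor_abs_sub (by positivity) (by positivity)).trans ?_
      rw [← mul_sub, abs_mul, abs_of_nonneg hN'.le]
    have hmain : C * |(⌊(n (k j):ℝ) * s⌋₊ : ℝ) - (⌊(n (k j):ℝ) * (qs:ℝ)⌋₊ : ℝ)|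
          * ((t/(n (k j))) * K)
        ≤ C * K * (|s - (qs:ℝ)| * t + t/(n (k j))) := by
      have h2 : ((n (k j):ℝ) * |s - (qs:ℝ)| + 1) * (t / (n (k j)))
          = |s - (qs:ℝ)| * t + t / (n (k j)) := by
        field_simp
      calc C * |(⌊(n (k j):ℝ) * s⌋₊ : ℝ) - (⌊(n (k j):ℝ) * (qs:ℝ)⌋₊ : ℝ)| * ((t/(n (k j))) * K)
          ≤ C * ((n (k j):ℝ) * |s - (qs:ℝ)| + 1) * ((t/(n (k j))) * K) := by
            refine mul_le_mul_of_nonneg_right ?_ (by positivity)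
            exact mul_le_mul_of_nonneg_left hfl hCpos.le
        _ = C * K * (((n (k j):ℝ) * |s - (qs:ℝ)| + 1) * (t / (n (k j)))) := by ring
        _ = C * K * (|s - (qs:ℝ)| * t + t/(n (k j))) := by rw [h2]
    have hterm1 : |φ ((F (t/(n (k j))) ^ ⌊(n (k j):ℝ) * s⌋₊) g)
          - φ ((F (t/(n (k j))) ^ ⌊(n (k j):ℝ) * (qs:ℝ)⌋₊) g)|
        ≤ ‖φ‖ * (2 * C * (ε/(24*(C*‖φ‖+1)))
            + C * K * (|s - (qs:ℝ)| * t + t/(n (k j)))) := by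
      refine ht1.trans ?_
      refine mul_le_mul_of_nonneg_left (add_le_add ?_ hmain) (norm_nonneg _)
      exact mul_le_mul_of_nonneg_left hgg'.le (by positivity)
    have hterm2 : |φ ((F (t/(n (k j))) ^ ⌊(n (k j):ℝ) * (qs:ℝ)⌋₊) (g - g'))|
        ≤ ‖φ‖ * C * (ε/(24*(C*‖φ‖+1))) := by
      calc |φ ((F (t/(n (k j))) ^ ⌊(n (k j):ℝ) * (qs:ℝ)⌋₊) (g - g'))|
          ≤ ‖φ‖ * ‖(F (t/(n (k j))) ^ ⌊(n (k j):ℝ) * (qs:ℝ)⌋₊) (g - g')‖ := by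
            rw [← Real.norm_eq_abs]; exact φ.le_opNorm _
        _ ≤ ‖φ‖ * (‖F (t/(n (k j))) ^ ⌊(n (k j):ℝ) * (qs:ℝ)⌋₊‖ * ‖g - g'‖) :=
            mul_le_mul_of_nonneg_left (ContinuousLinearMap.le_opNorm _ _) (norm_nonneg _)
        _ ≤ ‖φ‖ * (C * (ε/(24*(C*‖φ‖+1)))) := by
            refine mul_le_mul_of_nonneg_left ?_ (norm_nonneg _)
            exact mul_le_mul (hbC _ hmq) hgg'.le (norm_nonneg _) hCpos.le
        _ = ‖φ‖ * C * (ε/(24*(C*‖φ‖+1))) := by ring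
    have hterm3 : |(φ - φ') ((F (t/(n (k j))) ^ ⌊(n (k j):ℝ) * (qs:ℝ)⌋₊) g')|
        ≤ (ε/(24*(C*‖g'‖+1))) * (C * ‖g'‖) := by
      calc |(φ - φ') ((F (t/(n (k j))) ^ ⌊(n (k j):ℝ) * (qs:ℝ)⌋₊) g')|
          ≤ ‖φ - φ'‖ * ‖(F (t/(n (k j))) ^ ⌊(n (k j):ℝ) * (qs:ℝ)⌋₊) g'‖ := by
            rw [← Real.norm_eq_abs]; exact ContinuousLinearMap.le_opNorm _ _
        _ ≤ ‖φ - φ'‖ * (‖F (t/(n (k j))) ^ ⌊(n (k j):ℝ) * (qs:ℝ)⌋₊‖ * ‖g'‖) :=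
            mul_le_mul_of_nonneg_left (ContinuousLinearMap.le_opNorm _ _) (norm_nonneg _)
        _ ≤ (ε/(24*(C*‖g'‖+1))) * (C * ‖g'‖) := by
            refine mul_le_mul hφφ'.le ?_ (by positivity) (by positivity)
            exact mul_le_mul_of_nonneg_right (hbC _ hmq) (norm_nonneg _)
    -- arithmetic
    have ha1 : C * ‖φ‖ * (ε/(24*(C*‖φ‖+1))) ≤ ε/24 :=
      small_div_le' (by positivity) (by norm_num) hε
    have ha2 : C * ‖g'‖ * (ε/(24*(C*‖g'‖+1))) ≤ ε/24 :=
      small_div_le' (by positivity) (by norm_num) hε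
    have ha3 : ‖φ‖*C*K*t * (ε/(24*(‖φ‖*C*K*t+1))) ≤ ε/24 :=
      small_div_le' (by positivity) (by norm_num) hε
    have ha4 : ‖φ‖ * (C * K * (|s - (qs:ℝ)| * t)) ≤ ε/24 := by
      have h5 : |s - (qs:ℝ)| ≤ ε/(24*(‖φ‖*C*K*t+1)) := hsqs.le.trans (min_le_right _ _)
      calc ‖φ‖ * (C * K * (|s - (qs:ℝ)| * t)) = ‖φ‖*C*K*t * |s - (qs:ℝ)| := by ring
        _ ≤ ‖φ‖*C*K*t * (ε/(24*(‖φ‖*C*K*t+1))) :=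
            mul_le_mul_of_nonneg_left h5 (by positivity)
        _ ≤ ε/24 := ha3
    have ha5 : ‖φ‖ * (C * K * (t/(n (k j)))) ≤ ε/24 := by
      calc ‖φ‖ * (C * K * (t/(n (k j)))) = ‖φ‖*C*K*(t/(n (k j):ℝ)) := by ring
        _ ≤ ε/24 := hj24
    calc |(φ ((F (t/(n (k j))) ^ ⌊(n (k j):ℝ) * s⌋₊) g)
            - φ ((F (t/(n (k j))) ^ ⌊(n (k j):ℝ) * (qs:ℝ)⌋₊) g))
          + φ ((F (t/(n (k j))) ^ ⌊(n (k j):ℝ) * (qs:ℝ)⌋₊) (g - g'))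
          + (φ - φ') ((F (t/(n (k j))) ^ ⌊(n (k j):ℝ) * (qs:ℝ)⌋₊) g')|
        ≤ |φ ((F (t/(n (k j))) ^ ⌊(n (k j):ℝ) * s⌋₊) g)
            - φ ((F (t/(n (k j))) ^ ⌊(n (k j):ℝ) * (qs:ℝ)⌋₊) g)|
          + |φ ((F (t/(n (k j))) ^ ⌊(n (k j):ℝ) * (qs:ℝ)⌋₊) (g - g'))|
          + |(φ - φ') ((F (t/(n (k j))) ^ ⌊(n (k j):ℝ) * (qs:ℝ)⌋₊) g')| :=
          (abs_add_le _ _).trans (add_le_add (abs_add_le _ _) le_rfl)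
      _ ≤ (‖φ‖ * (2 * C * (ε/(24*(C*‖φ‖+1)))
            + C * K * (|s - (qs:ℝ)| * t + t/(n (k j)))))
          + ‖φ‖ * C * (ε/(24*(C*‖φ‖+1)))
          + (ε/(24*(C*‖g'‖+1))) * (C * ‖g'‖) :=
          add_le_add (add_le_add hterm1 hterm2) hterm3
      _ ≤ ε/24 + ε/24 + ε/24 + ε/24 + ε/24 + ε/24 := by
          have e1 : ‖φ‖ * (2 * C * (ε/(24*(C*‖φ‖+1)))
              + C * K * (|s - (qs:ℝ)| * t + t/(n (k j))))
            = 2 * (C * ‖φ‖ * (ε/(24*(C*‖φ‖+1))))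
              + ‖φ‖ * (C * K * (|s - (qs:ℝ)| * t)) + ‖φ‖ * (C * K * (t/(n (k j)))) := by
            ring
          have e2 : ‖φ‖ * C * (ε/(24*(C*‖φ‖+1))) = C * ‖φ‖ * (ε/(24*(C*‖φ‖+1))) := by ring
          have e3 : (ε/(24*(C*‖g'‖+1))) * (C * ‖g'‖)
              = C * ‖g'‖ * (ε/(24*(C*‖g'‖+1))) := by ring
          rw [e1, e2, e3]
          linarith
      _ ≤ ε/4 := by linarith
  refine ⟨max J₁ J₂, fun p hp q hq => ?_⟩
  have hp1 : J₁ ≤ p := le_trans (le_max_left _ _) hp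
  have hq1 : J₁ ≤ q := le_trans (le_max_left _ _) hq
  have hp2 : J₂ ≤ p := le_trans (le_max_right _ _) hp
  have hq2 : J₂ ≤ q := le_trans (le_max_right _ _) hq
  have hw0 := hJ₂ p hp2 q hq2
  rw [Real.dist_eq] at hw0 ⊢
  have hw : |v (k p) (⟨g', hg'mem⟩, ⟨φ', hφ'mem⟩, qs)
      - v (k q) (⟨g', hg'mem⟩, ⟨φ', hφ'mem⟩, qs)| < ε/3 := hw0
  have hcp := hclose p hp1
  have hcq := hclose q hq1
  calc |φ ((F (t/(n (k p))) ^ ⌊(n (k p):ℝ) * s⌋₊) g)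
        - φ ((F (t/(n (k q))) ^ ⌊(n (k q):ℝ) * s⌋₊) g)|
      ≤ |φ ((F (t/(n (k p))) ^ ⌊(n (k p):ℝ) * s⌋₊) g)
          - v (k p) (⟨g', hg'mem⟩, ⟨φ', hφ'mem⟩, qs)|
        + |v (k p) (⟨g', hg'mem⟩, ⟨φ', hφ'mem⟩, qs)
          - v (k q) (⟨g', hg'mem⟩, ⟨φ', hφ'mem⟩, qs)|
        + |v (k q) (⟨g', hg'mem⟩, ⟨φ', hφ'mem⟩, qs)
          - φ ((F (t/(n (k q))) ^ ⌊(n (k q):ℝ) * s⌋₊) g)| := by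
        have t1 := abs_sub_le (φ ((F (t/(n (k p))) ^ ⌊(n (k p):ℝ) * s⌋₊) g))
          (v (k p) (⟨g', hg'mem⟩, ⟨φ', hφ'mem⟩, qs))
          (φ ((F (t/(n (k q))) ^ ⌊(n (k q):ℝ) * s⌋₊) g))
        have t2 := abs_sub_le (v (k p) (⟨g', hg'mem⟩, ⟨φ', hφ'mem⟩, qs))
          (v (k q) (⟨g', hg'mem⟩, ⟨φ', hφ'mem⟩, qs))
          (φ ((F (t/(n (k q))) ^ ⌊(n (k q):ℝ) * s⌋₊) g))
        linarith
    _ < ε := by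
        have hcq' : |v (k q) (⟨g', hg'mem⟩, ⟨φ', hφ'mem⟩, qs)
            - φ ((F (t/(n (k q))) ^ ⌊(n (k q):ℝ) * s⌋₊) g)| ≤ ε/4 := by
          rw [abs_sub_comm]; exact hcq
        linarith

end ChernoffAux

/-- Proposition 1: construction of the limit family `T_s(g, φ)`
along a subsequence, and its properties (a)–(e). -/
theorem chernoff_prop1 (F : ℝ → (X →L[ℝ] X)) (M a : ℝ) (hM : 1 ≤ M)
    (hF : MemFClass F M a) (t : ℝ) (ht : 0 < t)
    (n : ℕ → ℕ) (hn : StrictMono n)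
    (Φ : Submodule ℝ X) (hΦc : IsClosed (Φ : Set X))
    (hΦs : TopologicalSpace.IsSeparable (Φ : Set X))
    (Ψ : Submodule ℝ (StrongDual ℝ X)) (hΨc : IsClosed (Ψ : Set (StrongDual ℝ X)))
    (hΨs : TopologicalSpace.IsSeparable (Ψ : Set (StrongDual ℝ X))) :
    -- existence of a subsequence along which all the limits exist
    (∃ k : ℕ → ℕ, StrictMono k ∧
      ∀ g ∈ Φ, ∀ φ ∈ Ψ, ∀ s : ℝ, 0 < s →
        ∃ L : ℝ, Tendsto (fun j : ℕ => φ (((F (t / (n (k j)))) ^ ⌊(n (k j) : ℝ) * s⌋₊) g))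
          atTop (𝓝 L)) ∧
    -- properties of the limit family, for any such chosen subsequence
    (∀ k : ℕ → ℕ, StrictMono k →
      ∀ T : ℝ → X → StrongDual ℝ X → ℝ,
      (∀ s : ℝ, 0 ≤ s → ∀ g ∈ Φ, ∀ φ ∈ Ψ,
        Tendsto (fun j : ℕ => φ (((F (t / (n (k j)))) ^ ⌊(n (k j) : ℝ) * (s / t)⌋₊) g))
          atTop (𝓝 (T s g φ))) →
      -- (a) bilinearity and the bound
      ((∀ s : ℝ, 0 ≤ s → ∀ g₁ ∈ Φ, ∀ g₂ ∈ Φ, ∀ φ ∈ Ψ,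
          T s (g₁ + g₂) φ = T s g₁ φ + T s g₂ φ) ∧
        (∀ s : ℝ, 0 ≤ s → ∀ (c : ℝ), ∀ g ∈ Φ, ∀ φ ∈ Ψ, T s (c • g) φ = c * T s g φ) ∧
        (∀ s : ℝ, 0 ≤ s → ∀ g ∈ Φ, ∀ φ₁ ∈ Ψ, ∀ φ₂ ∈ Ψ,
          T s g (φ₁ + φ₂) = T s g φ₁ + T s g φ₂) ∧
        (∀ s : ℝ, 0 ≤ s → ∀ (c : ℝ), ∀ g ∈ Φ, ∀ φ ∈ Ψ, T s g (c • φ) = c * T s g φ) ∧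
        (∀ s : ℝ, 0 ≤ s → ∀ g ∈ Φ, ∀ φ ∈ Ψ,
          |T s g φ| ≤ M * Real.exp (a * s) * ‖g‖ * ‖φ‖)) ∧
      -- (b) continuity in `s`, uniform in `φ` from bounded subsets of `Ψ`
      ((∀ g ∈ Φ, ∀ φ ∈ Ψ, ContinuousOn (fun s => T s g φ) (Set.Ici (0 : ℝ))) ∧
        (∀ g ∈ Φ, ∀ Υ : Set (StrongDual ℝ X), Υ ⊆ Ψ → Bornology.IsBounded Υ →
          ∀ s : ℝ, 0 ≤ s → ∀ ε > 0, ∃ δ > 0, ∀ s' : ℝ, 0 ≤ s' → |s' - s| < δ →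
            ∀ φ ∈ Υ, |T s' g φ - T s g φ| < ε)) ∧
      -- (c) differentiability in `s` for `f ∈ Φ ∩ D(F'(0))` with `F'(0)f ∈ Φ`
      (∀ f ∈ Φ, ∀ y : X, DerivAtZero F f y → y ∈ Φ →
        (∀ φ ∈ Ψ, ∀ s : ℝ, 0 ≤ s →
          HasDerivWithinAt (fun r => T r f φ) (T s y φ) (Set.Ici (0 : ℝ)) s) ∧
        (∀ Υ : Set (StrongDual ℝ X), Υ ⊆ Ψ → Bornology.IsBounded Υ →
          ∀ s : ℝ, 0 ≤ s → ∀ ε > 0, ∃ δ > 0, ∀ h : ℝ, h ≠ 0 → |h| < δ → 0 ≤ s + h →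
            ∀ φ ∈ Υ, |(T (s + h) f φ - T s f φ) / h - T s y φ| < ε)) ∧
      -- (d) the integral identity
      (∀ φ ∈ Ψ, ∀ ψ : StrongDual ℝ X, AdjDerivAtZero F φ ψ → ψ ∈ Ψ →
        ∀ l m : ℝ, 0 ≤ l → 0 ≤ m → ∀ f ∈ Φ,
          T m f φ - T l f φ = ∫ s in l..m, T s f ψ) ∧
      -- (e) differentiability in `s` through the adjoint derivative
      (∀ φ ∈ Ψ, ∀ ψ : StrongDual ℝ X, AdjDerivAtZero F φ ψ → ψ ∈ Ψ →
        ∀ f ∈ Φ, ∀ s : ℝ, 0 ≤ s →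
          HasDerivWithinAt (fun r => T r f φ) (T s f ψ) (Set.Ici (0 : ℝ)) s)) := by
  have hD : Dense {ψ : X | ∃ y, DerivAtZero F ψ y} := hF.2.2
  constructor
  · exact ChernoffAux.part1 hM hF ht n hn Φ hΦs Ψ hΨs
  · intro k hk T HT'
    have hN : Tendsto (fun j => n (k j)) atTop atTop := by
      exact tendsto_atTop_mono (fun j => le_trans hk.le_apply hn.le_apply) tendsto_id
    have HT : ∀ s : ℝ, 0 ≤ s → ∀ g ∈ Φ, ∀ φ ∈ Ψ,
        Tendsto (fun j => φ ((F (t / (n (k j) : ℕ)) ^ ⌊((n (k j) : ℕ) : ℝ) * (s / t)⌋₊) g))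
          atTop (𝓝 (T s g φ)) := fun s hs g hg φ hφ => HT' s hs g hg φ hφ
    refine ⟨⟨?_, ?_, ?_, ?_, ?_⟩, ⟨?_, ?_⟩, ?_, ?_, ?_⟩
    -- (a1) additivity in g
    · intro s hs g₁ hg₁ g₂ hg₂ φ hφ
      refine tendsto_nhds_unique (HT s hs (g₁ + g₂) (add_mem hg₁ hg₂) φ hφ)
        (((HT s hs g₁ hg₁ φ hφ).add (HT s hs g₂ hg₂ φ hφ)).congr fun j => by
          simp [map_add])
    -- (a2) scalar in g
    · intro s hs c g hg φ hφ
      refine tendsto_nhds_unique (HT s hs (c • g) (Submodule.smul_mem _ c hg) φ hφ)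
        (((HT s hs g hg φ hφ).const_mul c).congr fun j => by
          simp [_root_.map_smul, smul_eq_mul])
    -- (a3) additivity in φ
    · intro s hs g hg φ₁ hφ₁ φ₂ hφ₂
      refine tendsto_nhds_unique (HT s hs g hg (φ₁ + φ₂) (add_mem hφ₁ hφ₂))
        (((HT s hs g hg φ₁ hφ₁).add (HT s hs g hg φ₂ hφ₂)).congr fun j => by
          simp [ContinuousLinearMap.add_apply])
    -- (a4) scalar in φ
    · intro s hs c g hg φ hφ
      refine tendsto_nhds_unique (HT s hs g hg (c • φ) (Submodule.smul_mem _ c hφ))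
        (((HT s hs g hg φ hφ).const_mul c).congr fun j => by
          simp [ContinuousLinearMap.smul_apply, smul_eq_mul])
    -- (a5) bound
    · intro s hs g hg φ hφ
      exact ChernoffAux.abound hM hF ht hN HT hg hφ hs
    -- (b1) continuity
    · intro g hg φ hφ
      exact ChernoffAux.bcont hM hF ht hN HT hg hφ
    -- (b2) uniform continuity
    · intro g hg Υ hΥΨ hbdd s hs ε hε
      obtain ⟨R, hR⟩ := isBounded_iff_forall_norm_le.1 hbdd
      obtain ⟨δ, hδpos, hδ⟩ := ChernoffAux.key1 hM hF ht hN HT hg R hs hε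
      exact ⟨δ, hδpos, fun s' hs' hd φ hφ => hδ s' hs' hd φ (hΥΨ hφ) (hR φ hφ)⟩
    -- (c)
    · intro f hf y hd hy
      constructor
      · intro φ hφ s hs
        refine ChernoffAux.ftc (ChernoffAux.bcont hM hF ht hN HT hy hφ)
          (fun l m hl hm => ChernoffAux.cint hM hF ht hN HT hf hd hy hφ hl hm) hs
      · intro Υ hΥΨ hbdd s hs ε hε
        obtain ⟨R, hR⟩ := isBounded_iff_forall_norm_le.1 hbdd
        obtain ⟨δ, hδpos, hδ⟩ := ChernoffAux.key1 hM hF ht hN HT hy R hs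
          (half_pos hε)
        refine ⟨δ, hδpos, fun h hh hhδ hsh φ hφ => ?_⟩
        have hφΨ : φ ∈ Ψ := hΥΨ hφ
        have hint := ChernoffAux.cint hM hF ht hN HT hf hd hy hφΨ hs hsh
        have hintg : IntervalIntegrable (fun r => T r y φ) volume s (s + h) := by
          refine ((ChernoffAux.bcont hM hF ht hN HT hy hφΨ).mono ?_).intervalIntegrable
          intro r hr
          exact le_trans (le_min hs hsh) hr.1
        have hdiffEq : (∫ r in s..(s+h), (T r y φ - T s y φ))
            = (T (s+h) f φ - T s f φ) - h * T s y φ := by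
          rw [intervalIntegral.integral_sub hintg intervalIntegrable_const,
            intervalIntegral.integral_const, smul_eq_mul, ← hint]
          ring_nf
        have hbnd : ∀ r ∈ Set.uIoc s (s+h), ‖T r y φ - T s y φ‖ ≤ ε/2 := by
          intro r hr
          obtain ⟨hr0, hrs⟩ := ChernoffAux.mem_uIoc_facts hs hsh hr
          have : |r - s| < δ := lt_of_le_of_lt (hrs.trans (by rw [add_sub_cancel_left])) hhδ
          rw [Real.norm_eq_abs]
          exact (hδ r hr0 this φ hφΨ (hR φ hφ)).le
        have hI := intervalIntegral.norm_integral_le_of_norm_le_const hbnd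
        rw [Real.norm_eq_abs] at hI
        have habs : 0 < |h| := abs_pos.2 hh
        have key : (T (s+h) f φ - T s f φ) / h - T s y φ
            = (∫ r in s..(s+h), (T r y φ - T s y φ)) / h := by
          rw [hdiffEq]
          field_simp
        calc |(T (s+h) f φ - T s f φ) / h - T s y φ|
            = |∫ r in s..(s+h), (T r y φ - T s y φ)| / |h| := by rw [key, abs_div]
          _ ≤ (ε/2 * |s + h - s|) / |h| := by gcongr
          _ = ε/2 := by rw [add_sub_cancel_left]; field_simp
          _ < ε := by linarith
    -- (d)
    · intro φ hφ ψ hd hψ l m hl hm f hf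
      exact ChernoffAux.dint hM hF ht hN HT hφ hd hψ hf hl hm
    -- (e)
    · intro φ hφ ψ hd hψ f hf s hs
      refine ChernoffAux.ftc (ChernoffAux.bcont hM hF ht hN HT hf hψ)
        (fun l m hl hm => ChernoffAux.dint hM hF ht hN HT hφ hd hψ hf hl hm) hs
end
end

section
/- Let X be a Banach space and F ∈ 𝓕_X. Then the operator F'(0) (with domain D(F'(0))) is closable: whenever f_n ∈ D(F'(0)), f_n → 0 in X and F'(0)f_n → h in X, then h = 0. -/
open Filter Topology MeasureTheory

noncomputable section

variable {X : Type*} [NormedAddCommGroup X] [NormedSpace ℝ X] [CompleteSpace X]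

/-- Proposition 2: for `F ∈ 𝓕_X` the operator `F'(0)` is closable. -/
theorem chernoff_prop2 (F : ℝ → (X →L[ℝ] X)) (hF : MemF F)
    (f y : ℕ → X) (h : X)
    (hdom : ∀ n : ℕ, DerivAtZero F (f n) (y n))
    (hf0 : Tendsto f atTop (𝓝 (0 : X)))
    (hyh : Tendsto y atTop (𝓝 h)) :
    h = 0 := by
  obtain ⟨M, hM1, a, hF0, hbnd, hdense⟩ := hF
  set K : ℝ := M * Real.exp |a| with hKdef
  have hK1 : (1 : ℝ) ≤ K := by
    have := Real.one_le_exp (abs_nonneg a)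
    nlinarith
  have hKpos : (0 : ℝ) < K := lt_of_lt_of_le one_pos hK1
  -- uniform bound on powers
  have hpow : ∀ s : ℝ, 0 < s → s ≤ 1 → ∀ n k : ℕ, 0 < n → k ≤ n →
      ‖(F (s / n)) ^ k‖ ≤ K := by
    intro s hs hs1 n k hn hk
    rcases Nat.eq_zero_or_pos k with rfl | hkpos
    · rw [pow_zero, ContinuousLinearMap.one_def]
      exact le_trans ContinuousLinearMap.norm_id_le hK1
    · refine (hbnd n k hn hkpos s hs.le).trans ?_
      have hnpos : (0:ℝ) < n := Nat.cast_pos.mpr hn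
      have hexp : a * k * s / n ≤ |a| := by
        have h1 : (k:ℝ) * s / n ≤ 1 := by
          rw [div_le_one hnpos]
          calc (k:ℝ) * s ≤ (n:ℝ) * 1 :=
            mul_le_mul (Nat.cast_le.mpr hk) hs1 hs.le hnpos.le
          _ = n := mul_one _
        have h0 : (0:ℝ) ≤ (k:ℝ) * s / n := by positivity
        calc a * k * s / n = a * ((k:ℝ) * s / n) := by ring
          _ ≤ |a| * ((k:ℝ) * s / n) := mul_le_mul_of_nonneg_right (le_abs_self a) h0
          _ ≤ |a| * 1 := mul_le_mul_of_nonneg_left h1 (abs_nonneg a)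
          _ = |a| := mul_one _
      exact mul_le_mul_of_nonneg_left (Real.exp_le_exp.mpr hexp)
        (le_trans zero_le_one hM1)
  -- main estimate
  have main : ∀ ε : ℝ, 0 < ε → ‖h‖ ≤ (K + 5) * ε := by
    intro ε hε
    -- choose d in the domain close to h
    obtain ⟨d, ⟨v, hdv⟩, hdh'⟩ := hdense.exists_dist_lt h hε
    have hdh : ‖h - d‖ ≤ ε := by rw [← dist_eq_norm]; exact hdh'.le
    -- choose s
    set s : ℝ := min 1 (ε / (K * (‖v‖ + 1))) with hsdef
    have hvpos : (0:ℝ) < K * (‖v‖ + 1) := by positivity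
    have hs0 : 0 < s := lt_min one_pos (div_pos hε hvpos)
    have hs1 : s ≤ 1 := min_le_left _ _
    have hsle : s * (K * (‖v‖ + 1)) ≤ ε := by
      rw [← le_div_iff₀ hvpos]; exact min_le_right _ _
    -- s / n tends to 0 within (0, ∞)
    have hsn : Tendsto (fun n : ℕ => s / (n : ℝ)) atTop (𝓝[>] (0 : ℝ)) := by
      refine tendsto_nhdsWithin_of_tendsto_nhds_of_eventually_within _
        (tendsto_const_div_atTop_nhds_zero_nat s) ?_
      filter_upwards [eventually_gt_atTop 0] with n hn
      exact div_pos hs0 (Nat.cast_pos.mpr hn)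
    -- choose j
    obtain ⟨N1, hN1⟩ := Metric.tendsto_atTop.mp hyh (ε / K) (by positivity)
    obtain ⟨N2, hN2⟩ := Metric.tendsto_atTop.mp hf0 (s * ε / (K + 1))
      (by positivity)
    set j : ℕ := max N1 N2 with hjdef
    have hyj : ‖y j - h‖ ≤ ε / K := by
      rw [← dist_eq_norm]; exact (hN1 j (le_max_left _ _)).le
    have hfj : ‖f j‖ ≤ s * ε / (K + 1) := by
      have h2 := hN2 j (le_max_right _ _)
      rw [dist_zero_right] at h2
      exact h2.le
    -- choose n
    have hCj : Tendsto (fun n : ℕ => (s / (n:ℝ))⁻¹ •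
        (F (s / (n:ℝ)) (f j) - F 0 (f j))) atTop (𝓝 (y j)) := (hdom j).comp hsn
    have hCd : Tendsto (fun n : ℕ => (s / (n:ℝ))⁻¹ •
        (F (s / (n:ℝ)) d - F 0 d)) atTop (𝓝 v) := hdv.comp hsn
    obtain ⟨N3, hN3⟩ := Metric.tendsto_atTop.mp hCj (ε / K) (by positivity)
    obtain ⟨N4, hN4⟩ := Metric.tendsto_atTop.mp hCd 1 one_pos
    set n : ℕ := max 1 (max N3 N4) with hndef
    have hn0 : 0 < n := lt_of_lt_of_le one_pos (le_max_left _ _)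
    have hj1 : ‖(s / (n:ℝ))⁻¹ • (F (s / (n:ℝ)) (f j) - F 0 (f j)) - y j‖ ≤ ε / K := by
      rw [← dist_eq_norm]
      exact (hN3 n ((le_max_left N3 N4).trans (le_max_right 1 _))).le
    have hd1 : ‖(s / (n:ℝ))⁻¹ • (F (s / (n:ℝ)) d - F 0 d) - v‖ ≤ 1 := by
      rw [← dist_eq_norm]
      exact (hN4 n ((le_max_right N3 N4).trans (le_max_right 1 _))).le
    rw [hF0] at hj1 hd1
    simp only [ContinuousLinearMap.one_apply] at hj1 hd1
    -- setup for the telescoping argument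
    have hnpos : (0:ℝ) < (n:ℝ) := Nat.cast_pos.mpr hn0
    have hnne : ((n:ℝ)) ≠ 0 := hnpos.ne'
    have hτ : (0:ℝ) < s / (n:ℝ) := div_pos hs0 hnpos
    set G : X →L[ℝ] X := (s / (n:ℝ)) • (∑ k ∈ Finset.range n, F (s / (n:ℝ)) ^ k)
      with hGdef
    -- norm bound for G
    have hGnorm : ∀ w : X, ‖G w‖ ≤ s * K * ‖w‖ := by
      intro w
      have h1 : G w = (s / (n:ℝ)) •
          ((∑ k ∈ Finset.range n, F (s / (n:ℝ)) ^ k) w) := rfl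
      rw [h1, norm_smul, Real.norm_eq_abs, abs_of_pos hτ]
      have h2 : ‖(∑ k ∈ Finset.range n, F (s / (n:ℝ)) ^ k) w‖ ≤ n * (K * ‖w‖) := by
        rw [ContinuousLinearMap.sum_apply]
        refine (norm_sum_le _ _).trans ?_
        calc ∑ k ∈ Finset.range n, ‖(F (s / (n:ℝ)) ^ k) w‖
            ≤ ∑ _k ∈ Finset.range n, K * ‖w‖ := by
              refine Finset.sum_le_sum fun k hk => ?_
              exact (ContinuousLinearMap.le_opNorm _ _).trans
                (mul_le_mul_of_nonneg_right
                  (hpow s hs0 hs1 n k hn0 (Finset.mem_range.mp hk).le)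
                  (norm_nonneg w))
          _ = n * (K * ‖w‖) := by
              rw [Finset.sum_const, Finset.card_range, nsmul_eq_mul]
      calc s / (n:ℝ) * ‖(∑ k ∈ Finset.range n, F (s / (n:ℝ)) ^ k) w‖
          ≤ s / (n:ℝ) * ((n:ℝ) * (K * ‖w‖)) := mul_le_mul_of_nonneg_left h2 hτ.le
        _ = s * K * ‖w‖ := by field_simp
    -- telescoping
    have htel : ∀ (m : ℕ) (u : X),
        ∑ k ∈ Finset.range m, (F (s / (n:ℝ)) ^ k) (F (s / (n:ℝ)) u - u)
          = (F (s / (n:ℝ)) ^ m) u - u := by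
      intro m u
      have key : ∀ k : ℕ, (F (s / (n:ℝ)) ^ k) (F (s / (n:ℝ)) u - u)
          = (F (s / (n:ℝ)) ^ (k+1)) u - (F (s / (n:ℝ)) ^ k) u := by
        intro k
        rw [map_sub, pow_succ, ContinuousLinearMap.mul_apply]
      simp_rw [key]
      rw [Finset.sum_range_sub (fun k => (F (s / (n:ℝ)) ^ k) u)]
      simp
    have hGC : ∀ u : X, G ((s / (n:ℝ))⁻¹ • (F (s / (n:ℝ)) u - u))
        = (F (s / (n:ℝ)) ^ n) u - u := by
      intro u
      have h1 : G ((s / (n:ℝ))⁻¹ • (F (s / (n:ℝ)) u - u))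
          = (s / (n:ℝ)) • ((s / (n:ℝ))⁻¹ •
            (∑ k ∈ Finset.range n, (F (s / (n:ℝ)) ^ k) (F (s / (n:ℝ)) u - u))) := by
        simp only [hGdef, ContinuousLinearMap.smul_apply, _root_.map_smul,
          ContinuousLinearMap.sum_apply]
        exact smul_comm _ _ _
      rw [h1, smul_inv_smul₀ (ne_of_gt hτ), htel n u]
    -- bound on ‖G d - s • d‖
    have hwd : ‖(s / (n:ℝ))⁻¹ • (F (s / (n:ℝ)) d - d)‖ ≤ ‖v‖ + 1 := by
      have h1 := norm_add_le ((s / (n:ℝ))⁻¹ • (F (s / (n:ℝ)) d - d) - v) v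
      rw [sub_add_cancel] at h1
      linarith
    have hGd : ‖G d - s • d‖ ≤ s * ε := by
      have hid : G d - s • d
          = (s / (n:ℝ)) • (∑ k ∈ Finset.range n, ((F (s / (n:ℝ)) ^ k) d - d)) := by
        have h1 : G d = (s / (n:ℝ)) •
            (∑ k ∈ Finset.range n, (F (s / (n:ℝ)) ^ k) d) := by
          simp [hGdef, ContinuousLinearMap.smul_apply, ContinuousLinearMap.sum_apply]
        have h2 : s • d = (s / (n:ℝ)) • (∑ _k ∈ Finset.range n, d) := by
          rw [Finset.sum_const, Finset.card_range, ← Nat.cast_smul_eq_nsmul ℝ,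
            smul_smul]
          congr 1
          field_simp
        rw [h1, h2, ← smul_sub, ← Finset.sum_sub_distrib]
      have hterm : ∀ k ∈ Finset.range n,
          ‖(F (s / (n:ℝ)) ^ k) d - d‖ ≤ (n:ℝ) * (K * ‖F (s / (n:ℝ)) d - d‖) := by
        intro k hk
        have hkn : k ≤ n := (Finset.mem_range.mp hk).le
        rw [← htel k d]
        refine (norm_sum_le _ _).trans ?_
        calc ∑ i ∈ Finset.range k, ‖(F (s / (n:ℝ)) ^ i) (F (s / (n:ℝ)) d - d)‖
            ≤ ∑ _i ∈ Finset.range k, K * ‖F (s / (n:ℝ)) d - d‖ := by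
              refine Finset.sum_le_sum fun i hi => ?_
              exact (ContinuousLinearMap.le_opNorm _ _).trans
                (mul_le_mul_of_nonneg_right
                  (hpow s hs0 hs1 n i hn0 ((Finset.mem_range.mp hi).le.trans hkn))
                  (norm_nonneg _))
          _ = (k:ℝ) * (K * ‖F (s / (n:ℝ)) d - d‖) := by
              rw [Finset.sum_const, Finset.card_range, nsmul_eq_mul]
          _ ≤ (n:ℝ) * (K * ‖F (s / (n:ℝ)) d - d‖) := by
              refine mul_le_mul_of_nonneg_right (Nat.cast_le.mpr hkn) ?_
              positivity
      have hnTd : (n:ℝ) * ‖F (s / (n:ℝ)) d - d‖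
          = s * ‖(s / (n:ℝ))⁻¹ • (F (s / (n:ℝ)) d - d)‖ := by
        rw [norm_smul, Real.norm_eq_abs, abs_inv, abs_of_pos hτ]
        field_simp
      calc ‖G d - s • d‖
          = (s / (n:ℝ)) * ‖∑ k ∈ Finset.range n, ((F (s / (n:ℝ)) ^ k) d - d)‖ := by
            rw [hid, norm_smul, Real.norm_eq_abs, abs_of_pos hτ]
        _ ≤ (s / (n:ℝ)) * ((n:ℝ) * ((n:ℝ) * (K * ‖F (s / (n:ℝ)) d - d‖))) := by
            refine mul_le_mul_of_nonneg_left ?_ hτ.le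
            refine (norm_sum_le _ _).trans ?_
            calc ∑ k ∈ Finset.range n, ‖(F (s / (n:ℝ)) ^ k) d - d‖
                ≤ ∑ _k ∈ Finset.range n, (n:ℝ) * (K * ‖F (s / (n:ℝ)) d - d‖) :=
                  Finset.sum_le_sum hterm
              _ = (n:ℝ) * ((n:ℝ) * (K * ‖F (s / (n:ℝ)) d - d‖)) := by
                  rw [Finset.sum_const, Finset.card_range, nsmul_eq_mul]
        _ = s * K * ((n:ℝ) * ‖F (s / (n:ℝ)) d - d‖) := by field_simp
        _ = s * K * (s * ‖(s / (n:ℝ))⁻¹ • (F (s / (n:ℝ)) d - d)‖) := by rw [hnTd]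
        _ ≤ s * K * (s * (‖v‖ + 1)) := by
            refine mul_le_mul_of_nonneg_left ?_ (by positivity)
            exact mul_le_mul_of_nonneg_left hwd hs0.le
        _ = s * (s * (K * (‖v‖ + 1))) := by ring
        _ ≤ s * ε := mul_le_mul_of_nonneg_left hsle hs0.le
    -- bound on ‖G w1‖ where w1 is the difference quotient at f j
    have hGfj : ‖G ((s / (n:ℝ))⁻¹ • (F (s / (n:ℝ)) (f j) - f j))‖ ≤ s * ε := by
      rw [hGC]
      have h1 : ‖(F (s / (n:ℝ)) ^ n) (f j) - (f j)‖ ≤ (K + 1) * ‖f j‖ := by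
        have h2 := (ContinuousLinearMap.le_opNorm (F (s / (n:ℝ)) ^ n) (f j)).trans
          (mul_le_mul_of_nonneg_right (hpow s hs0 hs1 n n hn0 le_rfl)
            (norm_nonneg (f j)))
        calc ‖(F (s / (n:ℝ)) ^ n) (f j) - f j‖
            ≤ ‖(F (s / (n:ℝ)) ^ n) (f j)‖ + ‖f j‖ := norm_sub_le _ _
          _ ≤ K * ‖f j‖ + ‖f j‖ := by linarith
          _ = (K + 1) * ‖f j‖ := by ring
      refine h1.trans ?_
      calc (K + 1) * ‖f j‖ ≤ (K + 1) * (s * ε / (K + 1)) :=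
            mul_le_mul_of_nonneg_left hfj (by linarith)
        _ = s * ε := by field_simp
    -- decompose s • h
    have key : s • h = s • (h - d) + (s • d - G d) + G (d - h) + (G (h - y j))
        + G (y j - (s / (n:ℝ))⁻¹ • (F (s / (n:ℝ)) (f j) - f j))
        + G ((s / (n:ℝ))⁻¹ • (F (s / (n:ℝ)) (f j) - f j)) := by
      simp only [map_sub, smul_sub]
      abel
    have hchain : s * ‖h‖ ≤ s * ((K + 5) * ε) := by
      have hsh : s * ‖h‖ = ‖s • h‖ := by
        rw [norm_smul, Real.norm_eq_abs, abs_of_pos hs0]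
      rw [hsh, key]
      have b1 : ‖s • (h - d)‖ ≤ s * ε := by
        rw [norm_smul, Real.norm_eq_abs, abs_of_pos hs0]
        exact mul_le_mul_of_nonneg_left hdh hs0.le
      have b2 : ‖s • d - G d‖ ≤ s * ε := by rw [norm_sub_rev]; exact hGd
      have b3 : ‖G (d - h)‖ ≤ s * K * ε := by
        refine (hGnorm _).trans ?_
        rw [norm_sub_rev]
        exact mul_le_mul_of_nonneg_left hdh (by positivity)
      have b4 : ‖G (h - y j)‖ ≤ s * ε := by
        refine (hGnorm _).trans ?_
        rw [norm_sub_rev]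
        calc s * K * ‖y j - h‖ ≤ s * K * (ε / K) :=
              mul_le_mul_of_nonneg_left hyj (by positivity)
          _ = s * ε := by field_simp
      have b5 : ‖G (y j - (s / (n:ℝ))⁻¹ • (F (s / (n:ℝ)) (f j) - f j))‖ ≤ s * ε := by
        refine (hGnorm _).trans ?_
        rw [norm_sub_rev]
        calc s * K * ‖(s / (n:ℝ))⁻¹ • (F (s / (n:ℝ)) (f j) - f j) - y j‖
            ≤ s * K * (ε / K) := mul_le_mul_of_nonneg_left hj1 (by positivity)
          _ = s * ε := by field_simp
      calc ‖s • (h - d) + (s • d - G d) + G (d - h) + G (h - y j)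
            + G (y j - (s / (n:ℝ))⁻¹ • (F (s / (n:ℝ)) (f j) - f j))
            + G ((s / (n:ℝ))⁻¹ • (F (s / (n:ℝ)) (f j) - f j))‖
          ≤ ‖s • (h - d) + (s • d - G d) + G (d - h) + G (h - y j)
            + G (y j - (s / (n:ℝ))⁻¹ • (F (s / (n:ℝ)) (f j) - f j))‖
            + ‖G ((s / (n:ℝ))⁻¹ • (F (s / (n:ℝ)) (f j) - f j))‖ := norm_add_le _ _
        _ ≤ ‖s • (h - d) + (s • d - G d) + G (d - h) + G (h - y j)‖
            + ‖G (y j - (s / (n:ℝ))⁻¹ • (F (s / (n:ℝ)) (f j) - f j))‖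
            + ‖G ((s / (n:ℝ))⁻¹ • (F (s / (n:ℝ)) (f j) - f j))‖ := by
              gcongr
              exact norm_add_le _ _
        _ ≤ ‖s • (h - d) + (s • d - G d) + G (d - h)‖ + ‖G (h - y j)‖
            + ‖G (y j - (s / (n:ℝ))⁻¹ • (F (s / (n:ℝ)) (f j) - f j))‖
            + ‖G ((s / (n:ℝ))⁻¹ • (F (s / (n:ℝ)) (f j) - f j))‖ := by
              gcongr
              exact norm_add_le _ _
        _ ≤ ‖s • (h - d) + (s • d - G d)‖ + ‖G (d - h)‖ + ‖G (h - y j)‖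
            + ‖G (y j - (s / (n:ℝ))⁻¹ • (F (s / (n:ℝ)) (f j) - f j))‖
            + ‖G ((s / (n:ℝ))⁻¹ • (F (s / (n:ℝ)) (f j) - f j))‖ := by
              gcongr
              exact norm_add_le _ _
        _ ≤ ‖s • (h - d)‖ + ‖s • d - G d‖ + ‖G (d - h)‖ + ‖G (h - y j)‖
            + ‖G (y j - (s / (n:ℝ))⁻¹ • (F (s / (n:ℝ)) (f j) - f j))‖
            + ‖G ((s / (n:ℝ))⁻¹ • (F (s / (n:ℝ)) (f j) - f j))‖ := by
              gcongr
              exact norm_add_le _ _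
        _ ≤ s * ε + s * ε + s * K * ε + s * ε + s * ε + s * ε :=
              add_le_add (add_le_add (add_le_add (add_le_add
                (add_le_add b1 b2) b3) b4) b5) hGfj
        _ = s * ((K + 5) * ε) := by ring
    exact le_of_mul_le_mul_left hchain hs0
  -- conclude
  have hh0 : ‖h‖ ≤ 0 := by
    by_contra hc
    push_neg at hc
    have hm := main (‖h‖ / (2 * (K + 5))) (by positivity)
    have heq : (K + 5) * (‖h‖ / (2 * (K + 5))) = ‖h‖ / 2 := by
      field_simp
    rw [heq] at hm
    linarith
  exact norm_le_zero_iff.mp hh0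
end
end

section
/- Let X be a Banach space and F ∈ 𝓕_X. Assume a linear operator Z on X has domain D(Z) ⊆ D(F'(0)) and Zf = F'(0)f for all f ∈ D(Z). Then Z is closable: whenever f_n ∈ D(Z), f_n → 0 in X and Z f_n → h in X, then h = 0. -/
open Filter Topology MeasureTheory

noncomputable section

variable {X : Type*} [NormedAddCommGroup X] [NormedSpace ℝ X] [CompleteSpace X]

set_option linter.unusedSectionVars false

lemma chernoff_pow_bound (F : ℝ → (X →L[ℝ] X)) (M a : ℝ) (hM : 1 ≤ M)
    (hb : ∀ n m : ℕ, 0 < n → 0 < m → ∀ s : ℝ, 0 ≤ s →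
      ‖(F (s / n)) ^ m‖ ≤ M * Real.exp (a * m * s / n))
    (t : ℝ) (ht : 0 < t) (k j : ℕ) (hk : 0 < k) (hj : j ≤ k) :
    ‖(F (t / k)) ^ j‖ ≤ M * Real.exp (|a| * t) := by
  have hexp1 : (1:ℝ) ≤ Real.exp (|a| * t) := Real.one_le_exp (by positivity)
  rcases Nat.eq_zero_or_pos j with hj0 | hj0
  · subst hj0
    simp only [pow_zero]
    calc ‖(1 : X →L[ℝ] X)‖ ≤ 1 := ContinuousLinearMap.norm_id_le
      _ ≤ M * Real.exp (|a| * t) := by nlinarith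
  · refine (hb k j hk hj0 t ht.le).trans ?_
    have hMpos : (0:ℝ) < M := lt_of_lt_of_le one_pos hM
    refine mul_le_mul_of_nonneg_left (Real.exp_le_exp.2 ?_) hMpos.le
    have hk' : (0:ℝ) < (k:ℝ) := by exact_mod_cast hk
    rw [div_le_iff₀ hk']
    have h2 : a * j ≤ |a| * k :=
      calc a * j ≤ |a| * j :=
            mul_le_mul_of_nonneg_right (le_abs_self a) (by positivity)
        _ ≤ |a| * k :=
            mul_le_mul_of_nonneg_left (by exact_mod_cast hj) (abs_nonneg a)
    calc a * (j:ℝ) * t ≤ |a| * k * t := mul_le_mul_of_nonneg_right h2 ht.le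
      _ = |a| * t * k := by ring

/-- The averaging operator `(t/k) • ∑_{j<k} F(t/k)^j`. -/
def chernoffA (F : ℝ → (X →L[ℝ] X)) (t : ℝ) (k : ℕ) : X →L[ℝ] X :=
  (t / k) • ∑ j ∈ Finset.range k, (F (t / k)) ^ j

lemma chernoffA_norm (F : ℝ → (X →L[ℝ] X)) (M a : ℝ) (hM : 1 ≤ M)
    (hb : ∀ n m : ℕ, 0 < n → 0 < m → ∀ s : ℝ, 0 ≤ s →
      ‖(F (s / n)) ^ m‖ ≤ M * Real.exp (a * m * s / n))
    (t : ℝ) (ht : 0 < t) (k : ℕ) (hk : 0 < k) :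
    ‖chernoffA F t k‖ ≤ t * (M * Real.exp (|a| * t)) := by
  have hk' : (0:ℝ) < (k:ℝ) := by exact_mod_cast hk
  have h1 : ‖∑ j ∈ Finset.range k, (F (t / k)) ^ j‖
      ≤ (k:ℝ) * (M * Real.exp (|a| * t)) := by
    refine (norm_sum_le _ _).trans ?_
    refine le_trans (Finset.sum_le_sum (fun j hj => chernoff_pow_bound F M a hM hb t ht k j hk
        (le_of_lt (Finset.mem_range.1 hj)))) ?_
    rw [Finset.sum_const, Finset.card_range, nsmul_eq_mul]
  rw [chernoffA]
  calc ‖(t / (k:ℝ)) • ∑ j ∈ Finset.range k, (F (t / k)) ^ j‖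
      ≤ ‖t / (k:ℝ)‖ * ‖∑ j ∈ Finset.range k, (F (t / k)) ^ j‖ :=
        norm_smul_le (t / (k:ℝ)) (∑ j ∈ Finset.range k, (F (t / k)) ^ j)
    _ ≤ (t / k) * ((k:ℝ) * (M * Real.exp (|a| * t))) := by
        rw [Real.norm_eq_abs, abs_of_pos (div_pos ht hk')]
        exact mul_le_mul_of_nonneg_left h1 (le_of_lt (div_pos ht hk'))
    _ = t * (M * Real.exp (|a| * t)) := by field_simp

lemma chernoffA_apply_sub (F : ℝ → (X →L[ℝ] X)) (t : ℝ) (k : ℕ) (x : X) :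
    chernoffA F t k ((F (t / k)) x - x) = (t / k) • (((F (t / k)) ^ k) x - x) := by
  have h1 : (F (t / k)) x - x = (F (t / k) - 1) x := by simp
  rw [h1]
  show ((t / k) • ∑ j ∈ Finset.range k, (F (t / k)) ^ j) ((F (t / k) - 1) x) = _
  rw [ContinuousLinearMap.smul_apply]
  congr 1
  rw [← ContinuousLinearMap.mul_apply, geom_sum_mul]
  simp

lemma chernoff_pow_sub (F : ℝ → (X →L[ℝ] X)) (M a : ℝ) (hM : 1 ≤ M)
    (hb : ∀ n m : ℕ, 0 < n → 0 < m → ∀ s : ℝ, 0 ≤ s →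
      ‖(F (s / n)) ^ m‖ ≤ M * Real.exp (a * m * s / n))
    (t : ℝ) (ht : 0 < t) (k : ℕ) (hk : 0 < k) (j : ℕ) (hj : j ≤ k) (x : X) :
    ‖((F (t / k)) ^ j) x - x‖ ≤ (k : ℝ) * (M * Real.exp (|a| * t)) * ‖F (t / k) x - x‖ := by
  have h1 : ((F (t / k)) ^ j) x - x
      = (∑ i ∈ Finset.range j, (F (t / k)) ^ i) ((F (t / k)) x - x) := by
    have h2 : (F (t / k)) x - x = (F (t / k) - 1) x := by simp
    rw [h2, ← ContinuousLinearMap.mul_apply, geom_sum_mul]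
    simp
  rw [h1, ContinuousLinearMap.sum_apply]
  refine (norm_sum_le _ _).trans ?_
  have h3 : ∀ i ∈ Finset.range j, ‖((F (t / k)) ^ i) ((F (t / k)) x - x)‖
      ≤ (M * Real.exp (|a| * t)) * ‖F (t / k) x - x‖ := by
    intro i hi
    refine (ContinuousLinearMap.le_opNorm _ _).trans ?_
    exact mul_le_mul_of_nonneg_right
      (chernoff_pow_bound F M a hM hb t ht k i hk
        (le_trans (le_of_lt (Finset.mem_range.1 hi)) hj)) (norm_nonneg _)
  refine (Finset.sum_le_card_nsmul _ _ _ h3).trans ?_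
  rw [Finset.card_range, nsmul_eq_mul]
  have hj' : (j:ℝ) ≤ (k:ℝ) := by exact_mod_cast hj
  have : (0:ℝ) ≤ (M * Real.exp (|a| * t)) * ‖F (t / k) x - x‖ := by positivity
  calc (j:ℝ) * ((M * Real.exp (|a| * t)) * ‖F (t / k) x - x‖)
      ≤ (k:ℝ) * ((M * Real.exp (|a| * t)) * ‖F (t / k) x - x‖) :=
        mul_le_mul_of_nonneg_right hj' this
    _ = (k:ℝ) * (M * Real.exp (|a| * t)) * ‖F (t / k) x - x‖ := by ring

set_option maxHeartbeats 1000000 in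
theorem chernoff_aux (F : ℝ → (X →L[ℝ] X))
    (M a : ℝ) (hM : 1 ≤ M) (hF0 : F 0 = 1)
    (hb : ∀ n m : ℕ, 0 < n → 0 < m → ∀ s : ℝ, 0 ≤ s →
      ‖(F (s / n)) ^ m‖ ≤ M * Real.exp (a * m * s / n))
    (hdense : Dense {ψ : X | ∃ y, Tendsto (fun h : ℝ => h⁻¹ • (F h ψ - F 0 ψ)) (𝓝[>] (0:ℝ)) (𝓝 y)})
    (Z : X →ₗ.[ℝ] X)
    (hZF : ∀ f : Z.domain, Tendsto (fun h : ℝ => h⁻¹ • (F h (f:X) - F 0 (f:X))) (𝓝[>] (0:ℝ)) (𝓝 (Z f)))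
    (f : ℕ → Z.domain) (h : X)
    (hf0 : Tendsto (fun n => (f n : X)) atTop (𝓝 (0 : X)))
    (hyh : Tendsto (fun n => Z (f n)) atTop (𝓝 h)) :
    h = 0 := by
  have hMpos : (0:ℝ) < M := lt_of_lt_of_le one_pos hM
  -- t/k → 0 within (0,∞)
  have htk : ∀ t : ℝ, 0 < t → Tendsto (fun k : ℕ => t / (k:ℝ)) atTop (𝓝[>] (0:ℝ)) := by
    intro t ht
    apply tendsto_nhdsWithin_of_tendsto_nhds_of_eventually_within
    · exact tendsto_const_div_atTop_nhds_zero_nat t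
    · filter_upwards [eventually_gt_atTop 0] with k hk
      exact div_pos ht (by exact_mod_cast hk)
  -- derivative along t/k
  have hder : ∀ (x y : X),
      Tendsto (fun h : ℝ => h⁻¹ • (F h x - F 0 x)) (𝓝[>] (0:ℝ)) (𝓝 y) → ∀ t : ℝ, 0 < t →
      Tendsto (fun k : ℕ => (t/(k:ℝ))⁻¹ • (F (t/(k:ℝ)) x - x)) atTop (𝓝 y) := by
    intro x y hxy t ht
    have := hxy.comp (htk t ht)
    simpa only [Function.comp_def, hF0, ContinuousLinearMap.one_apply] using this
  -- Step A : A_k h → 0 for each t > 0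
  have stepA : ∀ t : ℝ, 0 < t → Tendsto (fun k : ℕ => chernoffA F t k h) atTop (𝓝 0) := by
    intro t ht
    have hCpos : (0:ℝ) < M * Real.exp (|a| * t) := by positivity
    rw [Metric.tendsto_atTop]
    intro ε hε
    have hn1 : Tendsto (fun n => t * (M * Real.exp (|a| * t)) * ‖h - Z (f n)‖) atTop (𝓝 0) := by
      have h1 : Tendsto (fun n => ‖h - Z (f n)‖) atTop (𝓝 0) := by
        have := (hyh.const_sub h).norm
        simpa using this
      simpa using h1.const_mul (t * (M * Real.exp (|a| * t)))
    have hn2 : Tendsto (fun n => (M * Real.exp (|a| * t) + 1) * ‖(f n : X)‖) atTop (𝓝 0) := by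
      have := hf0.norm
      simpa using this.const_mul (M * Real.exp (|a| * t) + 1)
    have hsum : Tendsto (fun n => t * (M * Real.exp (|a| * t)) * ‖h - Z (f n)‖
        + (M * Real.exp (|a| * t) + 1) * ‖(f n : X)‖) atTop (𝓝 0) := by
      simpa using hn1.add hn2
    obtain ⟨n, hn⟩ := (hsum.eventually_lt_const (half_pos hε)).exists
    have hd := hder ((f n : X)) (Z (f n)) (hZF (f n)) t ht
    have hk2 : Tendsto (fun k : ℕ => t * (M * Real.exp (|a| * t)) *
        ‖Z (f n) - (t/(k:ℝ))⁻¹ • (F (t/(k:ℝ)) (f n : X) - (f n : X))‖) atTop (𝓝 0) := by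
      have h1 : Tendsto (fun k : ℕ =>
          ‖Z (f n) - (t/(k:ℝ))⁻¹ • (F (t/(k:ℝ)) (f n : X) - (f n : X))‖) atTop (𝓝 0) := by
        have := (hd.const_sub (Z (f n))).norm
        simpa using this
      simpa using h1.const_mul (t * (M * Real.exp (|a| * t)))
    obtain ⟨N, hN⟩ := eventually_atTop.1 ((hk2.eventually_lt_const (half_pos hε)).and
      (eventually_ge_atTop 1))
    refine ⟨N, fun k hk => ?_⟩
    obtain ⟨hkA, hk1⟩ := hN k hk
    have hkpos : 0 < k := hk1
    have hkR : (0:ℝ) < (k:ℝ) := by exact_mod_cast hkpos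
    have hspos : (0:ℝ) < t/(k:ℝ) := div_pos ht hkR
    have hAnorm := chernoffA_norm F M a hM hb t ht k hkpos
    -- identity
    have hid : chernoffA F t k ((t/(k:ℝ))⁻¹ • (F (t/(k:ℝ)) (f n : X) - (f n : X)))
        = ((F (t/(k:ℝ))) ^ k) (f n : X) - (f n : X) := by
      rw [_root_.map_smul, chernoffA_apply_sub, smul_smul, inv_mul_cancel₀ (ne_of_gt hspos), one_smul]
    have hdec : chernoffA F t k h
        = chernoffA F t k (h - Z (f n))
          + chernoffA F t k (Z (f n) - (t/(k:ℝ))⁻¹ • (F (t/(k:ℝ)) (f n : X) - (f n : X)))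
          + (((F (t/(k:ℝ))) ^ k) (f n : X) - (f n : X)) := by
      rw [← hid, ← map_add, ← map_add]
      congr 1
      abel
    have b1 : ‖chernoffA F t k (h - Z (f n))‖
        ≤ t * (M * Real.exp (|a| * t)) * ‖h - Z (f n)‖ :=
      (ContinuousLinearMap.le_opNorm _ _).trans
        (mul_le_mul_of_nonneg_right hAnorm (norm_nonneg _))
    have b2 : ‖chernoffA F t k (Z (f n) - (t/(k:ℝ))⁻¹ • (F (t/(k:ℝ)) (f n : X) - (f n : X)))‖
        ≤ t * (M * Real.exp (|a| * t)) *
          ‖Z (f n) - (t/(k:ℝ))⁻¹ • (F (t/(k:ℝ)) (f n : X) - (f n : X))‖ :=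
      (ContinuousLinearMap.le_opNorm _ _).trans
        (mul_le_mul_of_nonneg_right hAnorm (norm_nonneg _))
    have b3 : ‖((F (t/(k:ℝ))) ^ k) (f n : X) - (f n : X)‖
        ≤ (M * Real.exp (|a| * t) + 1) * ‖(f n : X)‖ := by
      have hpow := chernoff_pow_bound F M a hM hb t ht k k hkpos le_rfl
      calc ‖((F (t/(k:ℝ))) ^ k) (f n : X) - (f n : X)‖
          ≤ ‖((F (t/(k:ℝ))) ^ k) (f n : X)‖ + ‖(f n : X)‖ := norm_sub_le _ _
        _ ≤ (M * Real.exp (|a| * t)) * ‖(f n : X)‖ + ‖(f n : X)‖ :=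
            add_le_add_left ((ContinuousLinearMap.le_opNorm _ _).trans
              (mul_le_mul_of_nonneg_right hpow (norm_nonneg _))) _
        _ = (M * Real.exp (|a| * t) + 1) * ‖(f n : X)‖ := by ring
    rw [dist_zero_right]
    calc ‖chernoffA F t k h‖
        ≤ ‖chernoffA F t k (h - Z (f n))
            + chernoffA F t k (Z (f n) - (t/(k:ℝ))⁻¹ • (F (t/(k:ℝ)) (f n : X) - (f n : X)))‖
          + ‖((F (t/(k:ℝ))) ^ k) (f n : X) - (f n : X)‖ := by
          rw [hdec]; exact norm_add_le _ _
      _ ≤ (‖chernoffA F t k (h - Z (f n))‖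
          + ‖chernoffA F t k (Z (f n) - (t/(k:ℝ))⁻¹ • (F (t/(k:ℝ)) (f n : X) - (f n : X)))‖)
          + ‖((F (t/(k:ℝ))) ^ k) (f n : X) - (f n : X)‖ :=
          add_le_add_left (norm_add_le _ _) _
      _ < ε := by linarith
  -- Step B : ‖ψ‖ ≤ M ‖ψ - h‖ for all ψ in the domain of F'(0)
  have stepB : ∀ ψ y : X,
      Tendsto (fun s : ℝ => s⁻¹ • (F s ψ - F 0 ψ)) (𝓝[>] (0:ℝ)) (𝓝 y) →
      ‖ψ‖ ≤ M * ‖ψ - h‖ := by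
    intro ψ y hψ
    have key : ∀ t : ℝ, 0 < t →
        ‖ψ‖ ≤ M * Real.exp (|a| * t) * (t * (‖y‖ + 1) + ‖ψ - h‖) := by
      intro t ht
      have hCpos : (0:ℝ) < M * Real.exp (|a| * t) := by positivity
      refine le_of_forall_pos_le_add ?_
      intro δ hδ
      have hdψ := hder ψ y hψ t ht
      have e1 : ∀ᶠ k : ℕ in atTop, ‖(t/(k:ℝ))⁻¹ • (F (t/(k:ℝ)) ψ - ψ)‖ ≤ ‖y‖ + 1 :=
        hdψ.norm.eventually_le_const (lt_add_one ‖y‖)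
      have e2 : ∀ᶠ k : ℕ in atTop, ‖chernoffA F t k h‖ ≤ δ * t := by
        have h0 := (stepA t ht).norm
        simp only [norm_zero] at h0
        exact h0.eventually_le_const (by positivity)
      obtain ⟨k, he1, he2, hk1⟩ := (e1.and (e2.and (eventually_ge_atTop 1))).exists
      have hkpos : 0 < k := hk1
      have hkR : (0:ℝ) < (k:ℝ) := by exact_mod_cast hkpos
      have hspos : (0:ℝ) < t/(k:ℝ) := div_pos ht hkR
      have hAnorm := chernoffA_norm F M a hM hb t ht k hkpos
      have e1' : ‖F (t/(k:ℝ)) ψ - ψ‖ ≤ (t/(k:ℝ)) * (‖y‖ + 1) := by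
        have h0 : F (t/(k:ℝ)) ψ - ψ = (t/(k:ℝ)) • ((t/(k:ℝ))⁻¹ • (F (t/(k:ℝ)) ψ - ψ)) := by
          rw [smul_inv_smul₀ (ne_of_gt hspos)]
        rw [h0, norm_smul, Real.norm_eq_abs, abs_of_pos hspos]
        exact mul_le_mul_of_nonneg_left he1 hspos.le
      have hsub : t • ψ - chernoffA F t k ψ
          = (t/(k:ℝ)) • ∑ j ∈ Finset.range k, (ψ - ((F (t/(k:ℝ)))^j) ψ) := by
        have h1 : (chernoffA F t k) ψ
            = (t/(k:ℝ)) • ∑ j ∈ Finset.range k, ((F (t/(k:ℝ)))^j) ψ := by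
          rw [chernoffA, ContinuousLinearMap.smul_apply, ContinuousLinearMap.sum_apply]
        rw [h1, Finset.sum_sub_distrib, smul_sub]
        congr 1
        rw [Finset.sum_const, Finset.card_range, ← Nat.cast_smul_eq_nsmul ℝ, smul_smul]
        congr 1
        field_simp
      have hsubn : ‖t • ψ - chernoffA F t k ψ‖
          ≤ t * ((M * Real.exp (|a| * t)) * (t * (‖y‖ + 1))) := by
        rw [hsub, norm_smul, Real.norm_eq_abs, abs_of_pos hspos]
        have hb2 : ∀ j ∈ Finset.range k, ‖ψ - ((F (t/(k:ℝ)))^j) ψ‖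
            ≤ (M * Real.exp (|a| * t)) * (t * (‖y‖+1)) := by
          intro j hj
          rw [norm_sub_rev]
          refine (chernoff_pow_sub F M a hM hb t ht k hkpos j
            (le_of_lt (Finset.mem_range.1 hj)) ψ).trans ?_
          calc (k:ℝ) * (M * Real.exp (|a| * t)) * ‖F (t/(k:ℝ)) ψ - ψ‖
              ≤ (k:ℝ) * (M * Real.exp (|a| * t)) * ((t/(k:ℝ)) * (‖y‖+1)) :=
                mul_le_mul_of_nonneg_left e1' (by positivity)
            _ = (M * Real.exp (|a| * t)) * (t * (‖y‖+1)) := by field_simp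
        calc (t/(k:ℝ)) * ‖∑ j ∈ Finset.range k, (ψ - ((F (t/(k:ℝ)))^j) ψ)‖
            ≤ (t/(k:ℝ)) * ((k:ℝ) * ((M * Real.exp (|a| * t)) * (t * (‖y‖+1)))) := by
              refine mul_le_mul_of_nonneg_left ?_ hspos.le
              refine (norm_sum_le _ _).trans ?_
              refine le_trans (Finset.sum_le_sum hb2) ?_
              rw [Finset.sum_const, Finset.card_range, nsmul_eq_mul]
          _ = t * ((M * Real.exp (|a| * t)) * (t * (‖y‖+1))) := by field_simp
      have h2 : ‖chernoffA F t k (ψ - h)‖ ≤ t * (M * Real.exp (|a| * t)) * ‖ψ - h‖ :=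
        (ContinuousLinearMap.le_opNorm _ _).trans
          (mul_le_mul_of_nonneg_right hAnorm (norm_nonneg _))
      have hts : t • ψ = (t • ψ - chernoffA F t k ψ) + chernoffA F t k (ψ - h)
          + chernoffA F t k h := by
        rw [map_sub]; abel
      have hcomb : t * ‖ψ‖
          ≤ t * (M * Real.exp (|a| * t) * (t * (‖y‖ + 1) + ‖ψ - h‖) + δ) := by
        calc t * ‖ψ‖ = ‖t • ψ‖ := by
              rw [norm_smul, Real.norm_eq_abs, abs_of_pos ht]
          _ = ‖(t • ψ - chernoffA F t k ψ) + chernoffA F t k (ψ - h)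
              + chernoffA F t k h‖ := by rw [← hts]
          _ ≤ ‖t • ψ - chernoffA F t k ψ‖ + ‖chernoffA F t k (ψ - h)‖
              + ‖chernoffA F t k h‖ := norm_add₃_le
          _ ≤ t * ((M * Real.exp (|a| * t)) * (t * (‖y‖ + 1)))
              + t * (M * Real.exp (|a| * t)) * ‖ψ - h‖ + δ * t := by
              exact add_le_add (add_le_add hsubn h2) he2
          _ = t * (M * Real.exp (|a| * t) * (t * (‖y‖ + 1) + ‖ψ - h‖) + δ) := by ring
      exact (mul_le_mul_iff_right₀ ht).1 hcomb
    have hlim : Tendsto (fun t : ℝ => M * Real.exp (|a| * t) * (t * (‖y‖ + 1) + ‖ψ - h‖))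
        (𝓝[>] (0:ℝ)) (𝓝 (M * ‖ψ - h‖)) := by
      have hc : Continuous fun t : ℝ => M * Real.exp (|a| * t) * (t * (‖y‖ + 1) + ‖ψ - h‖) :=
        (continuous_const.mul (Real.continuous_exp.comp (continuous_const.mul continuous_id))).mul
          ((continuous_id.mul continuous_const).add continuous_const)
      have h0 := hc.tendsto 0
      simp only [mul_zero, zero_mul, Real.exp_zero, mul_one, zero_add] at h0
      exact h0.mono_left nhdsWithin_le_nhds
    exact ge_of_tendsto hlim (eventually_nhdsWithin_of_forall fun t ht => key t ht)
  -- final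
  have hfin : ∀ ε : ℝ, 0 < ε → ‖h‖ ≤ (1 + M) * ε := by
    intro ε hε
    obtain ⟨ψ, hψS, hψd⟩ := Metric.mem_closure_iff.1 (hdense h) ε hε
    obtain ⟨y, hy⟩ := hψS
    have h1 := stepB ψ y hy
    have h2 : ‖ψ - h‖ ≤ ε := by
      rw [← dist_eq_norm, dist_comm]
      exact hψd.le
    have h3 : ‖h‖ ≤ ‖h - ψ‖ + ‖ψ‖ := by
      have := norm_add_le (h - ψ) ψ
      simpa using this
    rw [norm_sub_rev] at h3
    nlinarith [h1, h2, h3]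
  have hnorm : ‖h‖ ≤ 0 := by
    by_contra hc
    push_neg at hc
    have hM1 : (0:ℝ) < 1 + M := by linarith
    have hfe := hfin (‖h‖ / (2 * (1 + M))) (by positivity)
    have heq : (1 + M) * (‖h‖ / (2 * (1 + M))) = ‖h‖ / 2 := by
      field_simp
    rw [heq] at hfe
    linarith
  exact norm_le_zero_iff.1 hnorm

/-- Theorem 1: if `Z ⊆ F'(0)` for some `F ∈ 𝓕_X`, then `Z` is closable. -/
theorem chernoff_thm1 (F : ℝ → (X →L[ℝ] X)) (hF : MemF F)
    (Z : X →ₗ.[ℝ] X)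
    (hZF : ∀ f : Z.domain, DerivAtZero F (f : X) (Z f))
    (f : ℕ → Z.domain) (h : X)
    (hf0 : Tendsto (fun n => (f n : X)) atTop (𝓝 (0 : X)))
    (hyh : Tendsto (fun n => Z (f n)) atTop (𝓝 h)) :
    h = 0 := by
  obtain ⟨M, hM, a, hF0, hb, hdense⟩ := hF
  exact chernoff_aux F M a hM hF0 hb hdense Z hZF f h hf0 hyh
end
end
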